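/- arXiv:2009.03844 — 5 statements merged into one kernel-verified Lean document; each statement's English description precedes it below -/
import Mathlib

section
/- Fix integers p ≥ 1 and s ≥ 1 and an index set m ⊆ {1, …, p} with |m| = s. For β ∈ B_m := {β ∈ ℝ^p : β_j = 0 for all j ∉ m}, define the subset C_β of (ℝ × ℝ^{1+p}) × (ℝ × ℝ^{1+p}) by C_β := { ((y, x), (y', x')) : 1{y > y'} = 1{ (x₁ − x₁') + (x₋₁ − x₋₁')'β > 0 } }, where x = (x₁, x₋₁) with x₋₁ ∈ ℝ^p. Then the class {C_β : β ∈ B_m} shatters no finite subset of cardinality 2s + 3; that is, for every finite set A ⊆ (ℝ × ℝ^{1+p})² with |A| = 2s + 3, there exists a subset T ⊆ A such that T ≠ C_β ∩ A for every β ∈ B_m. (Equivalently, the VC-index of the class F_m = {f_β : β ∈ B_m} is at most 2s + 3.) -/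
noncomputable section

namespace RankVC

/-- An observation `w = (y, x)` with `x = (x₁, x₋₁)`, `x₋₁ ∈ ℝ^p`. -/
abbrev Obs (p : ℕ) : Type := ℝ × ℝ × (Fin p → ℝ)

/-- Euclidean inner product on `ℝ^p`. -/
def dot {p : ℕ} (a b : Fin p → ℝ) : ℝ := ∑ h, a h * b h

/-- `B_m = {β ∈ ℝ^p : β_j = 0 for all j ∉ m}`. -/
def Bm {p : ℕ} (m : Finset (Fin p)) : Set (Fin p → ℝ) :=
  {β | ∀ j ∉ m, β j = 0}

/-- The set of pairs of observations on which `f_β = 1`: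
`C_β = {((y,x),(y',x')) : 1{y > y'} = 1{(x₁ − x₁') + (x₋₁ − x₋₁')'β > 0}}`. -/
def Cset {p : ℕ} (β : Fin p → ℝ) : Set (Obs p × Obs p) :=
  {q | q.2.1 < q.1.1 ↔
    0 < (q.1.2.1 - q.2.2.1) + dot (fun h => q.1.2.2 h - q.2.2.2 h) β}

open Classical

/-- sign of the pair: `1` if `y' < y`, else `-1`. -/
def sgn {p : ℕ} (q : Obs p × Obs p) : ℝ := if q.2.1 < q.1.1 then 1 else -1

/-- the affine-in-β function. -/
def gfun {p : ℕ} (β : Fin p → ℝ) (q : Obs p × Obs p) : ℝ :=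
  (q.1.2.1 - q.2.2.1) + dot (fun h => q.1.2.2 h - q.2.2.2 h) β

lemma mem_Cset_iff {p : ℕ} (β : Fin p → ℝ) (q : Obs p × Obs p) :
    q ∈ Cset β ↔ (q.2.1 < q.1.1 ↔ 0 < gfun β q) := Iff.rfl

/-- signed coefficient vector, in a space of dimension `card m + 1`. -/
def vvec {p : ℕ} (m : Finset (Fin p)) (q : Obs p × Obs p) : (↥m → ℝ) × ℝ :=
  (fun j => sgn q * (q.1.2.2 j.1 - q.2.2.2 j.1), sgn q * (q.1.2.1 - q.2.2.1))

lemma sgn_gfun_eq {p : ℕ} (m : Finset (Fin p)) (β : Fin p → ℝ) (hβ : β ∈ Bm m)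
    (q : Obs p × Obs p) :
    sgn q * gfun β q = (vvec m q).2 + ∑ j : ↥m, (vvec m q).1 j * β j.1 := by
  have hdot : dot (fun h => q.1.2.2 h - q.2.2.2 h) β
      = ∑ j : ↥m, (q.1.2.2 j.1 - q.2.2.2 j.1) * β j.1 := by
    rw [dot, Finset.sum_coe_sort m (fun j => (q.1.2.2 j - q.2.2.2 j) * β j)]
    refine (Finset.sum_subset (Finset.subset_univ m) ?_).symm
    intro h _ hh
    rw [hβ h hh, mul_zero]
  simp only [gfun, vvec, hdot, mul_add, Finset.mul_sum]
  ring_nf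

/-- The class `{C_β : β ∈ B_m}` shatters no set of cardinality `2s + 3`; i.e.
the VC-index of `F_m = {f_β : β ∈ B_m}` is at most `2s + 3`. -/
theorem vc_index_bound (p s : ℕ) (hp : 1 ≤ p) (hs : 1 ≤ s)
    (m : Finset (Fin p)) (hm : m.card = s) :
    ∀ A : Finset (Obs p × Obs p), A.card = 2 * s + 3 →
      ∃ T : Set (Obs p × Obs p), T ⊆ ↑A ∧
        ∀ β ∈ Bm m, T ≠ Cset β ∩ ↑A := by
  intro A hA
  -- the vectors are not linearly independent
  have hrank : Module.finrank ℝ ((↥m → ℝ) × ℝ) = s + 1 := by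
    simp [Module.finrank_prod, Module.finrank_pi, Fintype.card_coe, hm]
  have hnli : ¬ LinearIndependent ℝ (fun q : ↥A => vvec m q.1) := by
    intro hli
    have := hli.fintype_card_le_finrank
    rw [hrank, Fintype.card_coe, hA] at this
    omega
  rw [Fintype.not_linearIndependent_iff] at hnli
  obtain ⟨a, hsum, q₀, ha₀⟩ := hnli
  -- main construction, given a relation with a suitably signed witness
  have main : ∀ a : ↥A → ℝ, (∑ q : ↥A, a q • vvec m q.1) = 0 →
      ∀ qst : ↥A, ((0 < a qst ∧ (qst : Obs p × Obs p).2.1 < (qst : Obs p × Obs p).1.1) ∨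
        (a qst < 0 ∧ ¬ (qst : Obs p × Obs p).2.1 < (qst : Obs p × Obs p).1.1)) →
      ∃ T : Set (Obs p × Obs p), T ⊆ ↑A ∧ ∀ β ∈ Bm m, T ≠ Cset β ∩ ↑A := by
    intro a hsum qst hqst
    refine ⟨{q | ∃ hq : q ∈ A, 0 < a ⟨q, hq⟩}, fun q hq => hq.1, ?_⟩
    intro β hβ hT
    -- membership characterization
    have hmem : ∀ q : ↥A, (0 < a q ↔ q.1 ∈ Cset β) := by
      intro q
      constructor
      · intro h
        have : q.1 ∈ ({q | ∃ hq : q ∈ A, 0 < a ⟨q, hq⟩} : Set (Obs p × Obs p)) := ⟨q.2, h⟩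
        rw [hT] at this
        exact this.1
      · intro h
        have : q.1 ∈ Cset β ∩ ↑A := ⟨h, q.2⟩
        rw [← hT] at this
        obtain ⟨hq, h'⟩ := this
        exact h'
    -- each term is nonnegative
    have hnn : ∀ q : ↥A, 0 ≤ a q * (sgn q.1 * gfun β q.1) := by
      intro q
      rcases lt_trichotomy (a q) 0 with hlt | heq | hgt
      · have hnot : ¬ q.1 ∈ Cset β := fun h => absurd ((hmem q).2 h) (not_lt.2 hlt.le)
        rw [mem_Cset_iff] at hnot
        by_cases hb : (q.1 : Obs p × Obs p).2.1 < (q.1 : Obs p × Obs p).1.1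
        · have hg : ¬ 0 < gfun β q.1 := fun h => hnot (iff_of_true hb h)
          have : sgn q.1 = 1 := if_pos hb
          rw [this, one_mul]
          nlinarith [not_lt.1 hg]
        · have hg : 0 < gfun β q.1 := by
            by_contra hg
            exact hnot (iff_of_false hb hg)
          have : sgn q.1 = -1 := if_neg hb
          rw [this]
          nlinarith
      · rw [heq, zero_mul]
      · have hc : q.1 ∈ Cset β := (hmem q).1 hgt
        rw [mem_Cset_iff] at hc
        by_cases hb : (q.1 : Obs p × Obs p).2.1 < (q.1 : Obs p × Obs p).1.1
        · have hg : 0 < gfun β q.1 := hc.1 hb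
          have : sgn q.1 = 1 := if_pos hb
          rw [this, one_mul]
          positivity
        · have hg : ¬ 0 < gfun β q.1 := fun h => hb (hc.2 h)
          have : sgn q.1 = -1 := if_neg hb
          rw [this]
          nlinarith [not_lt.1 hg]
    -- strict positivity at the witness
    have hpos : 0 < a qst * (sgn qst.1 * gfun β qst.1) := by
      rcases hqst with ⟨ha, hb⟩ | ⟨ha, hb⟩
      · have hc : qst.1 ∈ Cset β := (hmem qst).1 ha
        rw [mem_Cset_iff] at hc
        have hg : 0 < gfun β qst.1 := hc.1 hb
        have : sgn qst.1 = 1 := if_pos hb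
        rw [this, one_mul]
        positivity
      · have hnot : ¬ qst.1 ∈ Cset β := fun h => absurd ((hmem qst).2 h) (not_lt.2 ha.le)
        rw [mem_Cset_iff] at hnot
        have hg : 0 < gfun β qst.1 := by
          by_contra hg
          exact hnot (iff_of_false hb hg)
        have : sgn qst.1 = -1 := if_neg hb
        rw [this]
        nlinarith
    -- the sum is zero
    have hzero : ∑ q : ↥A, a q * (sgn q.1 * gfun β q.1) = 0 := by
      have h2 : (∑ q : ↥A, a q • vvec m q.1).2 = 0 := by rw [hsum]; rfl
      have h1 : ∀ j : ↥m, (∑ q : ↥A, a q • vvec m q.1).1 j = 0 := by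
        intro j; rw [hsum]; rfl
      rw [Prod.snd_sum] at h2
      simp only [Prod.smul_snd, smul_eq_mul] at h2
      have h1' : ∀ j : ↥m, ∑ q : ↥A, a q * (vvec m q.1).1 j = 0 := by
        intro j
        have := h1 j
        rw [Prod.fst_sum, Finset.sum_apply] at this
        simpa using this
      calc ∑ q : ↥A, a q * (sgn q.1 * gfun β q.1)
          = ∑ q : ↥A, (a q * (vvec m q.1).2
              + ∑ j : ↥m, (a q * (vvec m q.1).1 j) * β j.1) := by
            refine Finset.sum_congr rfl fun q _ => ?_
            rw [sgn_gfun_eq m β hβ, mul_add, Finset.mul_sum]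
            congr 1
            exact Finset.sum_congr rfl fun j _ => by ring
        _ = (∑ q : ↥A, a q * (vvec m q.1).2)
              + ∑ j : ↥m, (∑ q : ↥A, a q * (vvec m q.1).1 j) * β j.1 := by
            rw [Finset.sum_add_distrib, Finset.sum_comm]
            simp [Finset.sum_mul]
        _ = 0 := by
            rw [h2]
            simp only [Finset.univ_eq_attach] at h1' ⊢
            simp [h1']
    have : 0 < ∑ q : ↥A, a q * (sgn q.1 * gfun β q.1) :=
      Finset.sum_pos' (fun q _ => hnn q) ⟨qst, Finset.mem_univ _, hpos⟩
    rw [hzero] at this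
    exact lt_irrefl 0 this
  -- choose the right sign of the relation
  by_cases hb : (q₀ : Obs p × Obs p).2.1 < (q₀ : Obs p × Obs p).1.1
  · rcases ha₀.lt_or_gt with hlt | hgt
    · refine main (fun q => -a q) ?_ q₀ (Or.inl ⟨by simpa using hlt, hb⟩)
      simp only [neg_smul, Finset.sum_neg_distrib, neg_eq_zero]
      exact hsum
    · exact main a hsum q₀ (Or.inl ⟨hgt, hb⟩)
  · rcases ha₀.lt_or_gt with hlt | hgt
    · exact main a hsum q₀ (Or.inr ⟨hlt, hb⟩)
    · refine main (fun q => -a q) ?_ q₀ (Or.inr ⟨by simpa using hgt, hb⟩)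
      simp only [neg_smul, Finset.sum_neg_distrib, neg_eq_zero]
      exact hsum


end RankVC
end
end

section
/- There exists a universal constant C₄ ≥ 1 such that for all integers p ≥ 1 and s ≥ 1, every index set m ⊆ {1, …, p} with |m| = s, every probability measure Q on (ℝ × ℝ^{1+p}) × (ℝ × ℝ^{1+p}), and every ε ∈ (0, 1): there exists a finite collection G of measurable functions on (ℝ × ℝ^{1+p})² with |G| ≤ (32·e·C₄ / ε)^{4s+4} such that for every β ∈ B_m there is some γ ∈ G with ∫ (f_β − γ)² dQ < ε². In other words, the L₂(Q) covering number of the class F_m := {f_β : β ∈ B_m} satisfies sup_Q N(ε, F_m, L₂(Q)) ≤ (32·e·C₄ / ε)^{4s+4}. -/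
open MeasureTheory

noncomputable section

namespace RankCoverF

/-- An observation `w = (y, x)` with `x = (x₁, x₋₁)`, `x₋₁ ∈ ℝ^p`. -/
abbrev Obs (p : ℕ) : Type := ℝ × ℝ × (Fin p → ℝ)

/-- Euclidean inner product on `ℝ^p`. -/
def dot {p : ℕ} (a b : Fin p → ℝ) : ℝ := ∑ h, a h * b h

/-- The rank prediction rule `R_β(x, x') = 1{x₁ + x₋₁'β > x₁' + x₋₁''β}`. -/
def Rrule {p : ℕ} (β : Fin p → ℝ) (x x' : ℝ × (Fin p → ℝ)) : ℝ :=
  if x'.1 + dot x'.2 β < x.1 + dot x.2 β then 1 else 0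

/-- `f_β(w, w') = 1{ 1{y > y'} = R_β(x, x') }`. -/
def fker {p : ℕ} (β : Fin p → ℝ) (w w' : Obs p) : ℝ :=
  if (if w'.1 < w.1 then (1 : ℝ) else 0) = Rrule β w.2 w'.2 then 1 else 0

/-- `B_m = {β ∈ ℝ^p : β_j = 0 for all j ∉ m}`. -/
def Bm {p : ℕ} (m : Finset (Fin p)) : Set (Fin p → ℝ) :=
  {β | ∀ j ∉ m, β j = 0}

open scoped ENNReal

def tv {p : ℕ} (q : Obs p × Obs p) : ℝ := q.1.2.1 - q.2.2.1
def vv {p : ℕ} (q : Obs p × Obs p) (h : Fin p) : ℝ := q.1.2.2 h - q.2.2.2 h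
def lin {p : ℕ} (β : Fin p → ℝ) (q : Obs p × Obs p) : ℝ := tv q + dot (vv q) β
def gker {p : ℕ} (β : Fin p → ℝ) (q : Obs p × Obs p) : ℝ := fker β q.1 q.2

lemma ite_one_zero_eq {A B : Prop} [Decidable A] [Decidable B] :
    ((if A then (1:ℝ) else 0) = (if B then (1:ℝ) else 0)) ↔ (A ↔ B) := by
  by_cases hA : A <;> by_cases hB : B <;> simp [hA, hB]

lemma gker_eq {p : ℕ} (β : Fin p → ℝ) (q : Obs p × Obs p) :
    gker β q = if ((q.2.1 < q.1.1) ↔ (0 < lin β q)) then 1 else 0 := by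
  have hdot : dot q.1.2.2 β - dot q.2.2.2 β = dot (vv q) β := by
    simp only [dot, vv, ← Finset.sum_sub_distrib, sub_mul]
  have hcond : (q.2.2.1 + dot q.2.2.2 β < q.1.2.1 + dot q.1.2.2 β) ↔ (0 < lin β q) := by
    rw [lin, ← hdot, tv]; constructor <;> intro h <;> linarith
  unfold gker fker Rrule
  simp only [ite_one_zero_eq, hcond]

lemma gker_mem {p : ℕ} (β : Fin p → ℝ) (q : Obs p × Obs p) :
    gker β q = 0 ∨ gker β q = 1 := by
  rw [gker_eq]; split <;> simp

lemma measurable_lin {p : ℕ} (β : Fin p → ℝ) : Measurable (lin (p := p) β) := by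
  apply Measurable.add
  · exact (measurable_fst.snd.fst).sub (measurable_snd.snd.fst)
  · unfold dot
    apply Finset.measurable_sum
    intro h _
    exact (((measurable_pi_apply h).comp measurable_fst.snd.snd).sub
      ((measurable_pi_apply h).comp measurable_snd.snd.snd)).mul measurable_const

lemma measurable_gker {p : ℕ} (β : Fin p → ℝ) : Measurable (gker (p := p) β) := by
  have heq : gker (p := p) β = fun q => if ((q.2.1 < q.1.1) ↔ (0 < lin β q)) then (1:ℝ) else 0 :=
    funext fun q => gker_eq β q
  rw [heq]
  have hA : MeasurableSet {q : Obs p × Obs p | q.2.1 < q.1.1} :=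
    measurableSet_lt measurable_snd.fst measurable_fst.fst
  have hB : MeasurableSet {q : Obs p × Obs p | 0 < lin β q} :=
    measurableSet_lt measurable_const (measurable_lin β)
  have hS : MeasurableSet {q : Obs p × Obs p | (q.2.1 < q.1.1) ↔ (0 < lin β q)} := by
    have heq2 : {q : Obs p × Obs p | (q.2.1 < q.1.1) ↔ (0 < lin β q)} =
        ({q | q.2.1 < q.1.1} ∩ {q | 0 < lin β q}) ∪
        ({q | q.2.1 < q.1.1}ᶜ ∩ {q | 0 < lin β q}ᶜ) := by
      ext q; by_cases h1 : q.2.1 < q.1.1 <;> by_cases h2 : 0 < lin β q <;>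
        simp [h1, h2]
    rw [heq2]
    exact ((hA.inter hB).union (hA.compl.inter hB.compl))
  exact Measurable.ite hS measurable_const measurable_const

lemma sq_sub_ind {a b : ℝ} (ha : a = 0 ∨ a = 1) (hb : b = 0 ∨ b = 1) :
    (a - b)^2 = if a = b then 0 else 1 := by
  rcases ha with h | h <;> rcases hb with h' | h' <;> subst h <;> subst h' <;> norm_num

lemma integral_sq_eq {X : Type*} [MeasurableSpace X] (Q : Measure X) [IsProbabilityMeasure Q]
    {g g' : X → ℝ} (hg : Measurable g) (hg' : Measurable g')
    (h01 : ∀ q, g q = 0 ∨ g q = 1) (h01' : ∀ q, g' q = 0 ∨ g' q = 1) :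
    ∫ q, (g q - g' q)^2 ∂Q = (Q {q | g q = g' q}ᶜ).toReal := by
  have hD : MeasurableSet {q | g q = g' q} := measurableSet_eq_fun hg hg'
  have hfun : (fun q => (g q - g' q)^2) =
      Set.indicator {q | g q = g' q}ᶜ (fun _ => (1:ℝ)) := by
    funext q
    by_cases h : g q = g' q
    · simp [Set.indicator, h]
    · rw [sq_sub_ind (h01 q) (h01' q), if_neg h]
      simp [Set.indicator, h]
  rw [hfun, integral_indicator_const (1:ℝ) hD.compl, smul_eq_mul, mul_one]
  rfl

lemma measure_eq_le {X : Type*} [MeasurableSpace X] (Q : Measure X) [IsProbabilityMeasure Q]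
    {g g' : X → ℝ} (hg : Measurable g) (hg' : Measurable g')
    (h01 : ∀ q, g q = 0 ∨ g q = 1) (h01' : ∀ q, g' q = 0 ∨ g' q = 1)
    {ε : ℝ} (hint : ε^2 ≤ ∫ q, (g q - g' q)^2 ∂Q) :
    Q {q | g q = g' q} ≤ ENNReal.ofReal (1 - ε^2) := by
  have hD : MeasurableSet {q | g q = g' q} := measurableSet_eq_fun hg hg'
  have h1 : Q {q | g q = g' q} + Q {q | g q = g' q}ᶜ = 1 := by
    rw [measure_add_measure_compl hD, measure_univ]
  have hc : ENNReal.ofReal (ε^2) ≤ Q {q | g q = g' q}ᶜ := by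
    apply ENNReal.ofReal_le_of_le_toReal
    rwa [integral_sq_eq Q hg hg' h01 h01'] at hint
  have h2 : Q {q | g q = g' q} = 1 - Q {q | g q = g' q}ᶜ := by
    rw [← h1, ENNReal.add_sub_cancel_right (measure_ne_top _ _)]
  rw [h2, ENNReal.ofReal_sub _ (by positivity), ENNReal.ofReal_one]
  exact tsub_le_tsub_left hc 1

lemma exists_omega {X : Type*} [MeasurableSpace X] (Q : Measure X) [IsProbabilityMeasure Q]
    (T : Finset (X → ℝ)) (δ : ℝ≥0∞)
    (hδ : ∀ g ∈ T, ∀ g' ∈ T, g ≠ g' → Q {x | g x = g' x} ≤ δ)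
    (n : ℕ) (hlt : (T.card : ℝ≥0∞)^2 * δ^n < 1) :
    ∃ ω : Fin n → X, ∀ g ∈ T, ∀ g' ∈ T, g ≠ g' → ∃ k, g (ω k) ≠ g' (ω k) := by
  classical
  set μ : Measure (Fin n → X) := Measure.pi (fun _ => Q) with hμ
  haveI : IsProbabilityMeasure μ := by infer_instance
  set E : (X → ℝ) → (X → ℝ) → Set (Fin n → X) :=
    fun g g' => Set.univ.pi (fun _ => {x | g x = g' x}) with hE
  have hEmeas : ∀ g g', g ∈ T → g' ∈ T → g ≠ g' → μ (E g g') ≤ δ^n := by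
    intro g g' hgT hg'T hne
    rw [hE]
    simp only
    rw [hμ, Measure.pi_pi]
    rw [Finset.prod_const, Finset.card_univ, Fintype.card_fin]
    exact pow_le_pow_left' (hδ g hgT g' hg'T hne) n
  set U : Set (Fin n → X) := ⋃ pr ∈ T.offDiag, E pr.1 pr.2 with hU
  have hUlt : μ U < 1 := by
    calc μ U ≤ ∑ pr ∈ T.offDiag, μ (E pr.1 pr.2) := measure_biUnion_finset_le _ _
    _ ≤ ∑ _pr ∈ T.offDiag, δ^n := by
        apply Finset.sum_le_sum
        intro pr hpr
        obtain ⟨h1, h2, h3⟩ := Finset.mem_offDiag.1 hpr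
        exact hEmeas _ _ h1 h2 h3
    _ = (T.offDiag.card : ℝ≥0∞) * δ^n := by rw [Finset.sum_const, nsmul_eq_mul]
    _ ≤ (T.card : ℝ≥0∞)^2 * δ^n := by
        apply mul_le_mul_left
        rw [Finset.offDiag_card]
        norm_cast
        calc T.card * T.card - T.card ≤ T.card * T.card := Nat.sub_le _ _
        _ = T.card ^ 2 := (sq (T.card)).symm
    _ < 1 := hlt
  have hne : U ≠ Set.univ := by
    intro h
    rw [h] at hUlt
    simp [measure_univ] at hUlt
  obtain ⟨ω, hω⟩ : ∃ ω, ω ∉ U := by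
    by_contra h
    push_neg at h
    exact hne (Set.eq_univ_iff_forall.2 h)
  refine ⟨ω, fun g hg g' hg' hne' => ?_⟩
  by_contra hcon
  push_neg at hcon
  apply hω
  rw [hU]
  have hpr : ((g, g') : (X → ℝ) × (X → ℝ)) ∈ T.offDiag := Finset.mem_offDiag.2 ⟨hg, hg', hne'⟩
  exact Set.mem_biUnion (Finset.mem_coe.2 hpr) (Set.mem_pi.2 fun k _ => hcon k)

lemma count_patterns {p s n : ℕ} (m : Finset (Fin p)) (hm : m.card = s)
    (T : Finset ((Obs p × Obs p) → ℝ)) (βf : ((Obs p × Obs p) → ℝ) → (Fin p → ℝ))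
    (hβf : ∀ g ∈ T, βf g ∈ Bm m ∧ g = gker (βf g))
    (ω : Fin n → Obs p × Obs p)
    (hdist : ∀ g ∈ T, ∀ g' ∈ T, g ≠ g' → ∃ k, g (ω k) ≠ g' (ω k)) :
    T.card ≤ ∑ k ∈ Finset.Iic (s+1), n.choose k := by
  classical
  set Sfin : ((Obs p × Obs p) → ℝ) → Finset (Fin n) :=
    fun g => Finset.univ.filter (fun k => 0 < lin (βf g) (ω k)) with hSfin
  have hval : ∀ g ∈ T, ∀ k : Fin n, g (ω k) =
      if (((ω k).2.1 < (ω k).1.1) ↔ k ∈ Sfin g) then 1 else 0 := by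
    intro g hg k
    conv_lhs => rw [(hβf g hg).2]
    rw [gker_eq]
    simp [hSfin]
  have hinj : Set.InjOn Sfin ↑T := by
    intro g hg g' hg' heq
    by_contra hne
    obtain ⟨k, hk⟩ := hdist g (Finset.mem_coe.1 hg) g' (Finset.mem_coe.1 hg') hne
    apply hk
    rw [hval g (Finset.mem_coe.1 hg) k, hval g' (Finset.mem_coe.1 hg') k, heq]
  set 𝒜 : Finset (Finset (Fin n)) := T.image Sfin with h𝒜
  have hvc : 𝒜.vcDim ≤ s + 1 := by
    apply Finset.sup_le
    intro A hA
    rw [Finset.mem_shatterer] at hA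
    by_contra hcard
    push_neg at hcard
    obtain ⟨A', hA'sub, hA'card⟩ := Finset.exists_subset_card_eq (show s + 2 ≤ A.card from hcard)
    have hshat : 𝒜.Shatters A' := hA.mono_right hA'sub
    have hrank : Module.finrank ℝ ((↥m → ℝ) × ℝ) = s + 1 := by
      rw [Module.finrank_prod, Module.finrank_pi, Module.finrank_self, Fintype.card_coe, hm]
    set u : Fin n → ((↥m → ℝ) × ℝ) := fun k => ((fun j : ↥m => vv (ω k) j.1), tv (ω k)) with hu
    have hnli : ¬ LinearIndependent ℝ (fun k : ↥A' => u k.1) := by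
      intro hli
      have hle := hli.fintype_card_le_finrank
      rw [Fintype.card_coe, hA'card, hrank] at hle
      omega
    obtain ⟨c, hc0, i0, hi0⟩ : ∃ c : ↥A' → ℝ, (∑ i, c i • u i.1 = 0) ∧ ∃ i, 0 < c i := by
      obtain ⟨c, hc0, i0, hi0⟩ := Fintype.not_linearIndependent_iff.1 hnli
      rcases lt_or_gt_of_ne hi0 with h | h
      · refine ⟨-c, ?_, i0, by simpa using h⟩
        rw [← neg_zero, ← hc0]
        simp [neg_smul]
      · exact ⟨c, hc0, i0, h⟩
    set gg : Fin n → ℝ := fun k => if h : k ∈ A' then c ⟨k, h⟩ else 0 with hgg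
    have hrel : ∑ k ∈ A', gg k • u k = 0 := by
      rw [← Finset.sum_coe_sort A' (fun k => gg k • u k), ← hc0]
      apply Finset.sum_congr rfl
      intro i _
      simp [hgg, dif_pos i.2]
    obtain ⟨B, hB𝒜, hBt⟩ := hshat (Finset.filter_subset (fun k => 0 < gg k) A')
    obtain ⟨g₀, hg₀T, hgB⟩ := Finset.mem_image.1 hB𝒜
    set β : Fin p → ℝ := βf g₀ with hβ
    have hβBm : β ∈ Bm m := (hβf g₀ hg₀T).1
    have hlin : ∀ k : Fin n, lin β (ω k) = (u k).2 + ∑ j : ↥m, (u k).1 j * β j.1 := by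
      intro k
      simp only [hu, lin]
      congr 1
      rw [dot, Finset.sum_coe_sort m (fun h => vv (ω k) h * β h)]
      symm
      apply Finset.sum_subset (Finset.subset_univ m)
      intro h _ hhm
      rw [hβBm h hhm, mul_zero]
    have hsnd : ∑ k ∈ A', gg k * (u k).2 = 0 := by
      have h2 := congrArg Prod.snd hrel
      simpa only [Prod.snd_sum, Prod.smul_snd, smul_eq_mul, Prod.snd_zero] using h2
    have hfst : ∀ j : ↥m, ∑ k ∈ A', gg k * (u k).1 j = 0 := by
      intro j
      have h1 := congrArg (fun v : (↥m → ℝ) × ℝ => v.1 j) hrel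
      simpa only [Prod.fst_sum, Finset.sum_apply, Prod.smul_fst, Pi.smul_apply, smul_eq_mul,
        Prod.fst_zero, Pi.zero_apply] using h1
    have hzero : ∑ k ∈ A', gg k * lin β (ω k) = 0 := by
      calc ∑ k ∈ A', gg k * lin β (ω k)
          = ∑ k ∈ A', (gg k * (u k).2 + ∑ j : ↥m, gg k * ((u k).1 j * β j.1)) := by
            apply Finset.sum_congr rfl; intro k _; rw [hlin k, mul_add, Finset.mul_sum]
        _ = (∑ k ∈ A', gg k * (u k).2) + ∑ k ∈ A', ∑ j : ↥m, gg k * ((u k).1 j * β j.1) :=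
            Finset.sum_add_distrib
        _ = ∑ j : ↥m, ∑ k ∈ A', gg k * ((u k).1 j * β j.1) := by
            rw [hsnd, zero_add, Finset.sum_comm]
        _ = ∑ j : ↥m, (∑ k ∈ A', gg k * (u k).1 j) * β j.1 := by
            apply Finset.sum_congr rfl; intro j _
            rw [Finset.sum_mul]; apply Finset.sum_congr rfl; intro k _; ring
        _ = 0 := by
            apply Finset.sum_eq_zero; intro j _; rw [hfst j, zero_mul]
    have hiff : ∀ k ∈ A', (0 < lin β (ω k) ↔ 0 < gg k) := by
      intro k hk
      have hmemB : k ∈ Sfin g₀ ↔ 0 < lin β (ω k) := by simp [hSfin, hβ]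
      constructor
      · intro h
        have hkB : k ∈ B := hgB ▸ hmemB.2 h
        have hint : k ∈ A' ∩ B := Finset.mem_inter.2 ⟨hk, hkB⟩
        rw [hBt] at hint
        exact (Finset.mem_filter.1 hint).2
      · intro h
        have hkt : k ∈ A'.filter (fun k => 0 < gg k) := Finset.mem_filter.2 ⟨hk, h⟩
        rw [← hBt] at hkt
        exact hmemB.1 (hgB ▸ (Finset.mem_inter.1 hkt).2)
    have hpos : 0 < ∑ k ∈ A', gg k * lin β (ω k) := by
      apply Finset.sum_pos'
      · intro k hk
        by_cases hpk : 0 < gg k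
        · exact le_of_lt (mul_pos hpk ((hiff k hk).2 hpk))
        · have h1 : gg k ≤ 0 := le_of_not_gt hpk
          have h2 : lin β (ω k) ≤ 0 :=
            le_of_not_gt fun h3 => hpk ((hiff k hk).1 h3)
          have hprod := mul_nonneg (neg_nonneg.2 h1) (neg_nonneg.2 h2)
          rwa [neg_mul_neg] at hprod
      · refine ⟨↑i0, i0.2, ?_⟩
        have hggi : gg ↑i0 = c i0 := by simp [hgg, dif_pos i0.2]
        have hpi : 0 < gg ↑i0 := by rw [hggi]; exact hi0
        exact mul_pos hpi ((hiff ↑i0 i0.2).2 hpi)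
    exact absurd hzero (ne_of_gt hpos)
  calc T.card = 𝒜.card := (Finset.card_image_of_injOn hinj).symm
    _ ≤ 𝒜.shatterer.card := Finset.card_le_card_shatterer 𝒜
    _ ≤ ∑ k ∈ Finset.Iic 𝒜.vcDim, (Fintype.card (Fin n)).choose k :=
        Finset.card_shatterer_le_sum_vcDim
    _ ≤ ∑ k ∈ Finset.Iic (s+1), n.choose k := by
        rw [Fintype.card_fin]
        exact Finset.sum_le_sum_of_subset (Finset.Iic_subset_Iic.2 hvc)

lemma sauer_real (d n : ℕ) (hd : 1 ≤ d) (hdn : d ≤ n) :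
    ((∑ k ∈ Finset.Iic d, n.choose k : ℕ) : ℝ) ≤ (Real.exp 1 * n / d) ^ d := by
  have hn : 0 < n := lt_of_lt_of_le hd hdn
  have hn' : (0:ℝ) < n := by exact_mod_cast hn
  have hd' : (0:ℝ) < d := by exact_mod_cast hd
  set x : ℝ := (d:ℝ) / n with hx
  have hx0 : 0 < x := div_pos hd' hn'
  have hx1 : x ≤ 1 := by
    rw [hx, div_le_one hn']; exact_mod_cast hdn
  have key : x ^ d * ((∑ k ∈ Finset.Iic d, n.choose k : ℕ) : ℝ) ≤ Real.exp 1 ^ d := by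
    calc x ^ d * ((∑ k ∈ Finset.Iic d, n.choose k : ℕ) : ℝ)
        = ∑ k ∈ Finset.Iic d, (n.choose k : ℝ) * x ^ d := by
          push_cast
          rw [Finset.mul_sum]
          apply Finset.sum_congr rfl
          intro k _; ring
      _ ≤ ∑ k ∈ Finset.Iic d, (n.choose k : ℝ) * x ^ k := by
          apply Finset.sum_le_sum
          intro k hk
          have hle : x ^ d ≤ x ^ k :=
            pow_le_pow_of_le_one (le_of_lt hx0) hx1 (Finset.mem_Iic.1 hk)
          exact mul_le_mul_of_nonneg_left hle (by positivity)
      _ ≤ ∑ k ∈ Finset.range (n+1), (n.choose k : ℝ) * x ^ k := by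
          apply Finset.sum_le_sum_of_subset_of_nonneg
          · intro k hk
            rw [Finset.mem_range]
            exact Nat.lt_succ_of_le (le_trans (Finset.mem_Iic.1 hk) hdn)
          · intro k _ _; positivity
      _ = (x + 1) ^ n := by
          rw [add_pow]
          apply Finset.sum_congr rfl
          intro k _
          rw [one_pow]; ring
      _ ≤ Real.exp x ^ n := by
          apply pow_le_pow_left₀ (by positivity)
          linarith [Real.add_one_le_exp x]
      _ = Real.exp 1 ^ d := by
          rw [← Real.exp_nat_mul, hx]
          rw [mul_div_cancel₀ (d:ℝ) (ne_of_gt hn')]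
          rw [← Real.exp_nat_mul, mul_one]
  have hxd : 0 < x ^ d := pow_pos hx0 d
  rw [← mul_le_mul_iff_right₀ hxd]
  calc x ^ d * ((∑ k ∈ Finset.Iic d, n.choose k : ℕ) : ℝ) ≤ Real.exp 1 ^ d := key
    _ = x ^ d * (Real.exp 1 * n / d) ^ d := by
        rw [← mul_pow]
        congr 1
        rw [hx]
        field_simp

lemma packing_bound {p s : ℕ} (m : Finset (Fin p)) (hm : m.card = s)
    (Q : Measure (Obs p × Obs p)) [IsProbabilityMeasure Q]
    {ε : ℝ} (hε0 : 0 < ε) (hε1 : ε < 1)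
    (T : Finset ((Obs p × Obs p) → ℝ))
    (hT : ∀ g ∈ T, ∃ β ∈ Bm m, g = gker β)
    (hsep : ∀ g ∈ T, ∀ g' ∈ T, g ≠ g' → ε^2 ≤ ∫ q, (g q - g' q)^2 ∂Q) :
    (T.card : ℝ) ≤ (7 * Real.exp 1 / ε^2) ^ (2*s+2) := by
  classical
  have hε2 : (0:ℝ) < ε^2 := by positivity
  have hε21 : ε^2 ≤ 1 := by nlinarith
  have he1 : (1:ℝ) ≤ Real.exp 1 := by linarith [Real.add_one_le_exp 1]
  have hbase1 : (1:ℝ) ≤ 7 * Real.exp 1 / ε^2 := by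
    rw [le_div_iff₀ hε2]
    nlinarith
  by_cases hN1 : T.card ≤ 1
  · calc (T.card : ℝ) ≤ 1 := by exact_mod_cast hN1
      _ ≤ _ := one_le_pow₀ hbase1
  push_neg at hN1
  have hN2 : 2 ≤ T.card := hN1
  have hrN1 : (1:ℝ) ≤ (T.card : ℝ) := by exact_mod_cast le_trans one_le_two hN2
  have hrN0 : (0:ℝ) < (T.card : ℝ) := lt_of_lt_of_le one_pos hrN1
  set L := Real.log (T.card : ℝ) with hL
  have hL0 : 0 ≤ L := Real.log_nonneg hrN1
  have hch : ∀ g : (Obs p × Obs p) → ℝ, ∃ β : Fin p → ℝ,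
      g ∈ T → (β ∈ Bm m ∧ g = gker β) := by
    intro g
    by_cases h : g ∈ T
    · obtain ⟨β, hβ, he⟩ := hT g h
      exact ⟨β, fun _ => ⟨hβ, he⟩⟩
    · exact ⟨0, fun h' => absurd h' h⟩
  choose βf hβf using hch
  set n := (s+1) + ⌈(2*L+1)/ε^2⌉₊ with hn
  have hmg : ∀ g ∈ T, Measurable g := by
    intro g hg; rw [(hβf g hg).2]; exact measurable_gker _
  have h01 : ∀ g ∈ T, ∀ q, g q = 0 ∨ g q = 1 := by
    intro g hg q; rw [(hβf g hg).2]; exact gker_mem _ q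
  have hδ : ∀ g ∈ T, ∀ g' ∈ T, g ≠ g' →
      Q {x | g x = g' x} ≤ ENNReal.ofReal (1 - ε^2) :=
    fun g hg g' hg' hne => measure_eq_le Q (hmg g hg) (hmg g' hg') (h01 g hg) (h01 g' hg')
      (hsep g hg g' hg' hne)
  have hreal : ((T.card : ℝ))^2 * (1-ε^2)^n < 1 := by
    have hceil : (2*L+1)/ε^2 ≤ (n:ℝ) := by
      calc (2*L+1)/ε^2 ≤ (⌈(2*L+1)/ε^2⌉₊ : ℝ) := Nat.le_ceil _
      _ ≤ (n:ℝ) := by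
          rw [hn]; push_cast; linarith
    have hnε : 2*L + 1 ≤ (n:ℝ) * ε^2 := by
      calc 2*L+1 = ((2*L+1)/ε^2) * ε^2 := by field_simp
        _ ≤ (n:ℝ) * ε^2 := mul_le_mul_of_nonneg_right hceil (le_of_lt hε2)
    have hp1 : (1-ε^2)^n ≤ Real.exp (-(ε^2))^n := by
      apply pow_le_pow_left₀ (by linarith)
      linarith [Real.add_one_le_exp (-(ε^2))]
    have hp2 : Real.exp (-(ε^2))^n = Real.exp (-((n:ℝ)*ε^2)) := by
      rw [← Real.exp_nat_mul]; congr 1; ring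
    have hp3 : Real.exp (-((n:ℝ)*ε^2)) ≤ Real.exp (-(2*L+1)) := by
      apply Real.exp_le_exp.2; linarith
    have hNexp : ((T.card : ℝ))^2 = Real.exp (2*L) := by
      rw [hL, two_mul, Real.exp_add, Real.exp_log hrN0]; ring
    calc ((T.card : ℝ))^2 * (1-ε^2)^n
        ≤ Real.exp (2*L) * Real.exp (-(2*L+1)) := by
          rw [← hNexp]
          apply mul_le_mul_of_nonneg_left _ (by positivity)
          exact le_trans hp1 (le_trans (le_of_eq hp2) hp3)
      _ = Real.exp (-1) := by rw [← Real.exp_add]; ring_nf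
      _ < 1 := by
          rw [Real.exp_lt_one_iff]
          norm_num
  have hlt : ((T.card : ℕ) : ℝ≥0∞)^2 * (ENNReal.ofReal (1-ε^2))^n < 1 := by
    have h1 : ((T.card : ℕ) : ℝ≥0∞) = ENNReal.ofReal ((T.card : ℕ) : ℝ) := by
      rw [ENNReal.ofReal_natCast]
    rw [h1, ← ENNReal.ofReal_pow (Nat.cast_nonneg _),
      ← ENNReal.ofReal_pow (by linarith : (0:ℝ) ≤ 1 - ε^2),
      ← ENNReal.ofReal_mul (by positivity)]
    exact ENNReal.ofReal_lt_one.2 hreal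
  obtain ⟨ω, hω⟩ := exists_omega Q T _ hδ n hlt
  have hcount : T.card ≤ ∑ k ∈ Finset.Iic (s+1), n.choose k :=
    count_patterns m hm T βf (fun g hg => hβf g hg) ω hω
  have hsn : s + 1 ≤ n := by omega
  have hsauer := sauer_real (s+1) n (by omega) hsn
  set d : ℝ := ((s:ℝ) + 1) with hd
  have hs0 : (0:ℝ) ≤ (s:ℝ) := Nat.cast_nonneg s
  have hd1 : (1:ℝ) ≤ d := by rw [hd]; linarith
  have hd0 : (0:ℝ) < d := lt_of_lt_of_le one_pos hd1
  have hcast : (((s+1 : ℕ)):ℝ) = d := by rw [hd]; push_cast; ring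
  have hrN : (T.card : ℝ) ≤ (Real.exp 1 * n / d)^(s+1) := by
    calc (T.card : ℝ) ≤ ((∑ k ∈ Finset.Iic (s+1), n.choose k : ℕ) : ℝ) := by
          exact_mod_cast hcount
      _ ≤ (Real.exp 1 * n / ((s+1:ℕ):ℝ))^(s+1) := hsauer
      _ = (Real.exp 1 * n / d)^(s+1) := by rw [hcast]
  -- arithmetic finish
  set y : ℝ := (T.card : ℝ) ^ ((1:ℝ)/(2*d)) with hy
  have hy0 : 0 < y := Real.rpow_pos_of_pos hrN0 _
  have hy1 : 1 ≤ y := by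
    rw [hy]
    calc (1:ℝ) = (1:ℝ) ^ ((1:ℝ)/(2*d)) := (Real.one_rpow _).symm
      _ ≤ (T.card : ℝ) ^ ((1:ℝ)/(2*d)) :=
          Real.rpow_le_rpow zero_le_one hrN1 (by positivity)
  have hlogy : L = 2*d*Real.log y := by
    rw [hy, Real.log_rpow hrN0, hL]
    field_simp
  have hyL : L ≤ 2*d*y := by
    rw [hlogy]
    have hle : Real.log y ≤ y := le_trans (Real.log_le_sub_one_of_pos hy0) (by linarith)
    exact mul_le_mul_of_nonneg_left hle (by positivity)
  have hncast : (n:ℝ) ≤ d + ((2*L+1)/ε^2 + 1) := by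
    have hu0 : (0:ℝ) ≤ (2*L+1)/ε^2 := by positivity
    have hceil2 : (⌈(2*L+1)/ε^2⌉₊ : ℝ) < (2*L+1)/ε^2 + 1 := Nat.ceil_lt_add_one hu0
    rw [hn]; push_cast; rw [hd]; push_cast; linarith
  have hkey : (n:ℝ)*ε^2 ≤ d + 2*L + 2 := by
    have e1 : (n:ℝ)*ε^2 ≤ (d + ((2*L+1)/ε^2 + 1))*ε^2 :=
      mul_le_mul_of_nonneg_right hncast (le_of_lt hε2)
    have e2 : (d + ((2*L+1)/ε^2 + 1))*ε^2 = d*ε^2 + (2*L+1) + ε^2 := by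
      field_simp
      ring
    have e3 : d*ε^2 ≤ d := mul_le_of_le_one_right (le_of_lt hd0) hε21
    rw [e2] at e1
    linarith
  have h7 : d + 2*L + 2 ≤ 7*y*d := by
    have h1 : d ≤ y*d := le_mul_of_one_le_left (le_of_lt hd0) hy1
    have h2 : (1:ℝ) ≤ y*d := by
      calc (1:ℝ) = 1*1 := by ring
        _ ≤ y*d := mul_le_mul hy1 hd1 zero_le_one (le_of_lt hy0)
    linarith [hyL]
  have hend : Real.exp 1 * n / d ≤ 7 * Real.exp 1 * y / ε^2 := by
    rw [div_le_div_iff₀ hd0 hε2]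
    have h8 := mul_le_mul_of_nonneg_left (le_trans hkey h7) (le_of_lt (Real.exp_pos 1))
    nlinarith [h8]
  have hfin1 : (T.card:ℝ) ≤ (7*Real.exp 1 * y/ε^2)^(s+1) := by
    refine le_trans hrN (pow_le_pow_left₀ ?_ hend (s+1))
    positivity
  have hsplit : (7*Real.exp 1 * y/ε^2)^(s+1) = (7*Real.exp 1/ε^2)^(s+1) * y^(s+1) := by
    rw [← mul_pow]
    congr 1
    field_simp
  have hyps : y^(s+1) = (T.card:ℝ)^((1:ℝ)/2) := by
    rw [hy, ← Real.rpow_natCast ((T.card:ℝ)^((1:ℝ)/(2*d))) (s+1),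
      ← Real.rpow_mul (le_of_lt hrN0)]
    congr 1
    rw [hcast]
    field_simp
  have hc0 : (0:ℝ) < (7*Real.exp 1/ε^2)^(s+1) := by positivity
  have hNc : (T.card:ℝ) ≤ (7*Real.exp 1/ε^2)^(s+1) * (T.card:ℝ)^((1:ℝ)/2) := by
    rw [← hyps]
    exact le_trans hfin1 (le_of_eq hsplit)
  have hhalf0 : 0 < (T.card:ℝ)^((1:ℝ)/2) := Real.rpow_pos_of_pos hrN0 _
  have hself : (T.card:ℝ)^((1:ℝ)/2) * (T.card:ℝ)^((1:ℝ)/2) = (T.card:ℝ) := by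
    rw [← Real.rpow_add hrN0]
    norm_num
  have hy2 : (T.card:ℝ)^((1:ℝ)/2) ≤ (7*Real.exp 1/ε^2)^(s+1) := by
    have h9 : (T.card:ℝ)^((1:ℝ)/2) * (T.card:ℝ)^((1:ℝ)/2) ≤
        (7*Real.exp 1/ε^2)^(s+1) * (T.card:ℝ)^((1:ℝ)/2) := by
      rw [hself]; exact hNc
    exact le_of_mul_le_mul_right h9 hhalf0
  calc (T.card:ℝ) ≤ (7*Real.exp 1/ε^2)^(s+1) * (T.card:ℝ)^((1:ℝ)/2) := hNc
    _ ≤ (7*Real.exp 1/ε^2)^(s+1) * (7*Real.exp 1/ε^2)^(s+1) :=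
        mul_le_mul_of_nonneg_left hy2 (le_of_lt hc0)
    _ = (7 * Real.exp 1 / ε^2) ^ (2*s+2) := by
        rw [← pow_add]
        congr 1
        omega

/-- Uniform `L₂(Q)` covering-number bound for the class `F_m = {f_β : β ∈ B_m}`:
there is a universal constant `C₄ ≥ 1` with
`sup_Q N(ε, F_m, L₂(Q)) ≤ (32·e·C₄/ε)^{4s+4}` for every `ε ∈ (0,1)`. -/
theorem covering_number_Fm :
    ∃ C₄ : ℝ, 1 ≤ C₄ ∧
      ∀ (p s : ℕ), 1 ≤ p → 1 ≤ s →
      ∀ m : Finset (Fin p), m.card = s →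
      ∀ Q : Measure (Obs p × Obs p), IsProbabilityMeasure Q →
      ∀ ε : ℝ, 0 < ε → ε < 1 →
      ∃ G : Finset ((Obs p × Obs p) → ℝ),
        (∀ γ ∈ G, Measurable γ) ∧
        (G.card : ℝ) ≤ (32 * Real.exp 1 * C₄ / ε) ^ (4 * s + 4) ∧
        ∀ β ∈ Bm m, ∃ γ ∈ G,
          (∫ q, (fker β q.1 q.2 - γ q) ^ 2 ∂Q) < ε ^ 2 := by
  classical
  refine ⟨1, le_refl 1, ?_⟩
  intro p s hp hs m hm Q hQ ε hε0 hε1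
  haveI := hQ
  have hε2 : (0:ℝ) < ε^2 := by positivity
  have he1 : (1:ℝ) ≤ Real.exp 1 := by linarith [Real.add_one_le_exp 1]
  set P : Finset ((Obs p × Obs p) → ℝ) → Prop := fun T =>
    (∀ g ∈ T, ∃ β ∈ Bm m, g = gker β) ∧
    (∀ g ∈ T, ∀ g' ∈ T, g ≠ g' → ε^2 ≤ ∫ q, (g q - g' q)^2 ∂Q) with hP
  have hMbound : ∀ T, P T → (T.card : ℝ) ≤ (7 * Real.exp 1 / ε^2) ^ (2*s+2) := fun T hT =>
    packing_bound m hm Q hε0 hε1 T hT.1 hT.2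
  set Cset : Set ℕ := {k | ∃ T, P T ∧ T.card = k} with hC
  have hCne : Cset.Nonempty :=
    ⟨0, ∅, ⟨fun g hg => absurd hg (Finset.notMem_empty g),
      fun g hg => absurd hg (Finset.notMem_empty g)⟩, Finset.card_empty⟩
  have hCbdd : BddAbove Cset := by
    refine ⟨⌊(7 * Real.exp 1 / ε^2) ^ (2*s+2)⌋₊, fun k hk => ?_⟩
    obtain ⟨T, hT, hTc⟩ := hk
    exact Nat.le_floor (hTc ▸ hMbound T hT)
  obtain ⟨T, hTP, hTcard⟩ := Nat.sSup_mem hCne hCbdd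
  refine ⟨T, ?_, ?_, ?_⟩
  · intro γ hγ
    obtain ⟨β, _, he⟩ := hTP.1 γ hγ
    rw [he]; exact measurable_gker β
  · have h1 : (T.card : ℝ) ≤ (7 * Real.exp 1 / ε^2) ^ (2*s+2) := hMbound T hTP
    refine le_trans h1 ?_
    have hbase : 7*Real.exp 1/ε^2 ≤ (32*Real.exp 1*1/ε)^2 := by
      rw [mul_one, div_pow]
      rw [div_le_div_iff_of_pos_right hε2]
      nlinarith [he1]
    calc (7*Real.exp 1/ε^2)^(2*s+2) ≤ ((32*Real.exp 1*1/ε)^2)^(2*s+2) := by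
          apply pow_le_pow_left₀ (by positivity) hbase
      _ = (32*Real.exp 1*1/ε)^(4*s+4) := by
          rw [← pow_mul]
          congr 1
          omega
  · intro β hβ
    by_contra hcon
    push_neg at hcon
    by_cases hgT : gker β ∈ T
    · have h0 := hcon (gker β) hgT
      have hzero : (∫ q, (fker β q.1 q.2 - gker β q)^2 ∂Q) = 0 := by
        have heq : (fun q : Obs p × Obs p => (fker β q.1 q.2 - gker β q)^2) =
            fun _ => (0:ℝ) :=
          funext fun q => by rw [show gker β q = fker β q.1 q.2 from rfl]; ring
        rw [heq, integral_zero]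
      rw [hzero] at h0
      linarith
    · have hP' : P (insert (gker β) T) := by
        constructor
        · intro g hg
          rcases Finset.mem_insert.1 hg with h | h
          · exact ⟨β, hβ, h⟩
          · exact hTP.1 g h
        · intro g hg g' hg' hne
          rcases Finset.mem_insert.1 hg with h | h <;>
            rcases Finset.mem_insert.1 hg' with h' | h'
          · exact absurd (h.trans h'.symm) hne
          · subst h
            have h2 := hcon g' h'
            have heq : (fun q : Obs p × Obs p => (fker β q.1 q.2 - g' q)^2) =
                fun q => (gker β q - g' q)^2 := rfl
            calc ε^2 ≤ ∫ q, (fker β q.1 q.2 - g' q)^2 ∂Q := le_of_not_gt (by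
                  intro hlt
                  exact absurd hlt (not_lt.2 h2))
              _ = ∫ q, (gker β q - g' q)^2 ∂Q := by rw [heq]
          · subst h'
            have h2 := hcon g h
            calc ε^2 ≤ ∫ q, (fker β q.1 q.2 - g q)^2 ∂Q := h2
              _ = ∫ q, (g q - gker β q)^2 ∂Q := by
                  rw [show (fun q : Obs p × Obs p => (fker β q.1 q.2 - g q)^2) =
                    fun q => (g q - gker β q)^2 from funext fun q => by
                      rw [show gker β q = fker β q.1 q.2 from rfl]; ring]
          · exact hTP.2 g h g' h' hne
      have hcard' : T.card + 1 ∈ Cset :=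
        ⟨insert (gker β) T, hP', Finset.card_insert_of_notMem hgT⟩
      have hle : T.card + 1 ≤ sSup Cset := le_csSup hCbdd hcard'
      omega


end RankCoverF
end
end

section
/- There exists a universal constant C₄ ≥ 1 such that for all integers p ≥ 1 and s ≥ 1, every index set m ⊆ {1, …, p} with |m| = s, every probability distribution P on ℝ × ℝ^{1+p}, every probability measure Q on (ℝ × ℝ^{1+p}) × (ℝ × ℝ^{1+p}), and every ε ∈ (0, 1): the L₂(Q) covering number of the class H_m := {2^{−1} h_β : β ∈ B_m} satisfies N(ε, H_m, L₂(Q)) ≤ (512·e·C₄ / ε)^{16s+16}. -/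
set_option maxHeartbeats 1000000


open MeasureTheory

noncomputable section

namespace RankCoverH

/-- An observation `w = (y, x)` with `x = (x₁, x₋₁)`, `x₋₁ ∈ ℝ^p`. -/
abbrev Obs (p : ℕ) : Type := ℝ × ℝ × (Fin p → ℝ)

/-- Euclidean inner product on `ℝ^p`. -/
def dot {p : ℕ} (a b : Fin p → ℝ) : ℝ := ∑ h, a h * b h

/-- The rank prediction rule `R_β(x, x') = 1{x₁ + x₋₁'β > x₁' + x₋₁''β}`. -/
def Rrule {p : ℕ} (β : Fin p → ℝ) (x x' : ℝ × (Fin p → ℝ)) : ℝ :=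
  if x'.1 + dot x'.2 β < x.1 + dot x.2 β then 1 else 0

/-- `f_β(w, w') = 1{ 1{y > y'} = R_β(x, x') }`. -/
def fker {p : ℕ} (β : Fin p → ℝ) (w w' : Obs p) : ℝ :=
  if (if w'.1 < w.1 then (1 : ℝ) else 0) = Rrule β w.2 w'.2 then 1 else 0

/-- The population criterion `S(β) = ∫∫ f_β(w, w') dP(w) dP(w')`. -/
def Spop {p : ℕ} (P : Measure (Obs p)) (β : Fin p → ℝ) : ℝ :=
  ∫ w, ∫ w', fker β w w' ∂P ∂P

/-- The `P`-degenerate second-order Hoeffding kernel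
`h_β(w, w') = f_β(w, w') − ∫ f_β(w, v) dP(v) − ∫ f_β(v, w') dP(v) + S(β)`. -/
def hker {p : ℕ} (P : Measure (Obs p)) (β : Fin p → ℝ) (w w' : Obs p) : ℝ :=
  fker β w w' - (∫ v, fker β w v ∂P) - (∫ v, fker β v w' ∂P) + Spop P β

/-- `B_m = {β ∈ ℝ^p : β_j = 0 for all j ∉ m}`. -/
def Bm {p : ℕ} (m : Finset (Fin p)) : Set (Fin p → ℝ) :=
  {β | ∀ j ∉ m, β j = 0}


section Aux
open Finset Real ENNReal


lemma binom_sum_le (n d : ℕ) (hd : 1 ≤ d) (hdn : d ≤ n) :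
    (∑ k ∈ Finset.range (d+1), (n.choose k : ℝ)) ≤ (Real.exp 1 * n / d) ^ d := by
  have hn0 : 1 ≤ n := le_trans hd hdn
  have hn : 0 < (n:ℝ) := by exact_mod_cast hn0
  have hdR : 0 < (d:ℝ) := by exact_mod_cast hd
  set t : ℝ := d / n with ht
  have ht0 : 0 < t := by positivity
  have ht1 : t ≤ 1 := by
    rw [ht, div_le_one hn]; exact_mod_cast hdn
  have key : (∑ k ∈ Finset.range (d+1), (n.choose k : ℝ)) * t ^ d ≤ Real.exp d := by
    calc (∑ k ∈ Finset.range (d+1), (n.choose k : ℝ)) * t ^ d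
        = ∑ k ∈ Finset.range (d+1), (n.choose k : ℝ) * t ^ d := by rw [Finset.sum_mul]
      _ ≤ ∑ k ∈ Finset.range (d+1), (n.choose k : ℝ) * t ^ k := by
          apply Finset.sum_le_sum
          intro k hk
          have : t ^ d ≤ t ^ k :=
            pow_le_pow_of_le_one ht0.le ht1 (Nat.lt_succ_iff.mp (Finset.mem_range.mp hk))
          have hc : (0:ℝ) ≤ n.choose k := by positivity
          nlinarith
      _ ≤ ∑ k ∈ Finset.range (n+1), (n.choose k : ℝ) * t ^ k := by
          apply Finset.sum_le_sum_of_subset_of_nonneg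
          · exact Finset.range_subset_range.mpr (by omega)
          · intro k _ _; positivity
      _ = (t + 1) ^ n := by
          rw [add_pow]
          refine Finset.sum_congr rfl fun k hk => ?_
          rw [one_pow]; ring
      _ ≤ (Real.exp t) ^ n := by
          apply pow_le_pow_left₀ (by positivity)
          linarith [Real.add_one_le_exp t]
      _ = Real.exp (t * n) := by rw [← Real.exp_nat_mul]; ring_nf
      _ = Real.exp d := by
          congr 1
          rw [ht]; field_simp
  have htd : 0 < t ^ d := by positivity
  have h2 : (∑ k ∈ Finset.range (d+1), (n.choose k : ℝ)) ≤ Real.exp d / t ^ d :=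
    (le_div_iff₀ htd).mpr key
  refine h2.trans (le_of_eq ?_)
  have : Real.exp (d:ℝ) = Real.exp 1 ^ d := by
    rw [← Real.exp_nat_mul]; ring_nf
  rw [this, div_eq_mul_inv, ← inv_pow, ← mul_pow]
  congr 1
  rw [ht]
  field_simp

-- arithmetic solving lemma
lemma arith_pack (N d : ℕ) (hd : 1 ≤ d) (δ : ℝ) (hδ0 : 0 < δ) (hδ1 : δ < 1) (hN : 1 ≤ N)
    (H : ∀ n : ℕ, d ≤ n → (N:ℝ)^2 * (1-δ)^n < 1 → (N:ℝ) ≤ (Real.exp 1 * n / d) ^ d) :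
    (N:ℝ) ≤ (6 * Real.exp 1 / δ) ^ (2*d) := by
  have hNR : (1:ℝ) ≤ N := by exact_mod_cast hN
  have hlogN : 0 ≤ Real.log N := Real.log_nonneg hNR
  have hdR : 0 < (d:ℝ) := by exact_mod_cast hd
  set n : ℕ := max d (⌊2 * Real.log N / δ⌋₊ + 1) with hn
  have hdn : d ≤ n := le_max_left _ _
  have hcond : (N:ℝ)^2 * (1-δ)^n < 1 := by
    have h1 : 2 * Real.log N / δ < ⌊2 * Real.log N / δ⌋₊ + 1 := Nat.lt_floor_add_one _
    have h2 : 2 * Real.log N / δ < n := by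
      have : (⌊2 * Real.log N / δ⌋₊ + 1 : ℝ) ≤ n := by
        exact_mod_cast Nat.cast_le.mpr (le_max_right d _)
      linarith
    have h3 : 2 * Real.log N < δ * n := by
      rw [div_lt_iff₀ hδ0] at h2; linarith
    have h4 : (1-δ)^n ≤ Real.exp (-δ) ^ n := by
      apply pow_le_pow_left₀ (by linarith)
      linarith [Real.add_one_le_exp (-δ)]
    have h5 : Real.exp (-δ) ^ n = Real.exp (-(δ * n)) := by
      rw [← Real.exp_nat_mul]; ring_nf
    have h6 : Real.exp (-(δ * n)) < Real.exp (-(2 * Real.log N)) := by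
      apply Real.exp_lt_exp.mpr; linarith
    have h7 : Real.exp (-(2 * Real.log N)) = ((N:ℝ)^2)⁻¹ := by
      rw [Real.exp_neg]
      congr 1
      rw [show (2:ℝ) * Real.log N = Real.log (N^2) by rw [Real.log_pow]; push_cast; ring]
      exact Real.exp_log (by positivity)
    have hN2 : (0:ℝ) < (N:ℝ)^2 := by positivity
    calc (N:ℝ)^2 * (1-δ)^n ≤ (N:ℝ)^2 * Real.exp (-δ)^n := by nlinarith
      _ = (N:ℝ)^2 * Real.exp (-(δ*n)) := by rw [h5]
      _ < (N:ℝ)^2 * ((N:ℝ)^2)⁻¹ := by rw [← h7] at *; nlinarith [Real.exp_pos (-(δ*n)), Real.exp_pos (-(2*Real.log N))]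
      _ = 1 := by field_simp
  have hnle : (n:ℝ) ≤ d + 2 * Real.log N / δ + 1 := by
    have hK : (0:ℝ) ≤ (⌊2 * Real.log N / δ⌋₊ : ℝ) := Nat.cast_nonneg _
    have h1 : (n:ℝ) = max (d:ℝ) ((⌊2 * Real.log N / δ⌋₊ : ℝ) + 1) := by
      rw [hn]; push_cast [Nat.cast_max]; ring_nf
    have h2 : (⌊2 * Real.log N / δ⌋₊ : ℝ) ≤ 2 * Real.log N / δ :=
      Nat.floor_le (by positivity)
    have h3 : max (d:ℝ) ((⌊2 * Real.log N / δ⌋₊ : ℝ) + 1) ≤ (d:ℝ) + ((⌊2 * Real.log N / δ⌋₊ : ℝ) + 1) := by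
      apply max_le
      · linarith
      · linarith [(hdR : (0:ℝ) < d)]
    linarith
  have hkey := H n hdn hcond
  have hdnR : (d:ℝ) ≤ n := by exact_mod_cast hdn
  have hdR1 : (1:ℝ) ≤ d := by exact_mod_cast hd
  obtain ⟨m, hm⟩ : ∃ x : ℝ, x = Real.exp 1 * n / d := ⟨_, rfl⟩
  rw [← hm] at hkey
  have he0 : (0:ℝ) < Real.exp 1 := Real.exp_pos 1
  have he1 : (1:ℝ) ≤ Real.exp 1 := by linarith [Real.add_one_le_exp (1:ℝ)]
  have hm1 : 1 ≤ m := by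
    rw [hm, le_div_iff₀ hdR]
    nlinarith
  have hlogm : Real.log N ≤ d * Real.log m := by
    calc Real.log N ≤ Real.log (m ^ d) := Real.log_le_log (by positivity) hkey
      _ = d * Real.log m := by rw [Real.log_pow]
  have hmle0 : m ≤ Real.exp 1 + (2 * Real.exp 1 / δ) * (Real.log N / d) + Real.exp 1 / d := by
    have h2 : Real.exp 1 * ((d:ℝ) + 2 * Real.log N / δ + 1) / d
        = Real.exp 1 + (2 * Real.exp 1 / δ) * (Real.log N / d) + Real.exp 1 / d := by
      field_simp
    rw [← h2, hm]
    gcongr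
  clear hm hn hcond hdn H
  clear_value n
  obtain ⟨sm, hsm⟩ : ∃ x : ℝ, x = Real.sqrt m := ⟨_, rfl⟩
  have hsm1 : 1 ≤ sm := by
    rw [hsm, show (1:ℝ) = Real.sqrt 1 by simp]; exact Real.sqrt_le_sqrt hm1
  have hmsq : m = sm * sm := by rw [hsm]; exact (Real.mul_self_sqrt (by linarith)).symm
  have hlogsm : Real.log m ≤ 2 * sm := by
    have h1 : Real.log sm ≤ sm - 1 := Real.log_le_sub_one_of_pos (by linarith)
    have h2 : Real.log m = 2 * Real.log sm := by
      rw [hmsq, Real.log_mul (by linarith) (by linarith)]; ring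
    linarith
  have hmle : m ≤ 2 * Real.exp 1 + (4 * Real.exp 1 / δ) * sm := by
    have h3 : Real.log N / d ≤ Real.log m := by
      rw [div_le_iff₀ hdR]; linarith [hlogm]
    have h4 : Real.exp 1 / d ≤ Real.exp 1 := by
      rw [div_le_iff₀ hdR]; nlinarith
    have h5 : (2 * Real.exp 1 / δ) * (Real.log N / d) ≤ (2 * Real.exp 1 / δ) * Real.log m :=
      mul_le_mul_of_nonneg_left h3 (by positivity)
    have h6 : (2 * Real.exp 1 / δ) * Real.log m ≤ (2 * Real.exp 1 / δ) * (2 * sm) :=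
      mul_le_mul_of_nonneg_left hlogsm (by positivity)
    calc m ≤ Real.exp 1 + (2 * Real.exp 1 / δ) * (Real.log N / d) + Real.exp 1 / d := hmle0
      _ ≤ Real.exp 1 + (2 * Real.exp 1 / δ) * (2*sm) + Real.exp 1 := by linarith
      _ = 2 * Real.exp 1 + (4 * Real.exp 1 / δ) * sm := by ring
  have hsmb : sm ≤ 6 * Real.exp 1 / δ := by
    have h1 : sm * sm ≤ 2 * Real.exp 1 * sm + (4 * Real.exp 1 / δ) * sm := by
      have : 2 * Real.exp 1 ≤ 2 * Real.exp 1 * sm := by nlinarith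
      rw [← hmsq]; linarith [hmle]
    have h2 : sm ≤ 2 * Real.exp 1 + 4 * Real.exp 1 / δ := by
      have hsm0 : (0:ℝ) < sm := by linarith
      have h1' : sm * sm ≤ (2 * Real.exp 1 + 4 * Real.exp 1 / δ) * sm := by linarith
      exact le_of_mul_le_mul_right h1' hsm0
    have h4 : sm * δ ≤ (2 * Real.exp 1 + 4 * Real.exp 1 / δ) * δ :=
      mul_le_mul_of_nonneg_right h2 hδ0.le
    have h5 : (2 * Real.exp 1 + 4 * Real.exp 1 / δ) * δ = 2 * Real.exp 1 * δ + 4 * Real.exp 1 := by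
      field_simp
    rw [le_div_iff₀ hδ0]
    nlinarith
  have hmb : m ≤ (6 * Real.exp 1 / δ) ^ 2 := by
    rw [hmsq, sq]
    have h0 : (0:ℝ) ≤ sm := by linarith
    nlinarith
  calc (N:ℝ) ≤ m ^ d := hkey
    _ ≤ ((6 * Real.exp 1 / δ) ^ 2) ^ d := pow_le_pow_left₀ (by linarith) hmb d
    _ = (6 * Real.exp 1 / δ) ^ (2*d) := by rw [← pow_mul]


lemma packing_sample {α : Type*} [MeasurableSpace α] (μ : Measure α) [IsProbabilityMeasure μ]
    (n N : ℕ) (D : Fin N → Fin N → Set α) (hD : ∀ i j, MeasurableSet (D i j))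
    (δe : ℝ≥0∞) (hsep : ∀ i j, i ≠ j → δe ≤ μ (D i j))
    (hlt : (N:ℝ≥0∞)^2 * (1 - δe)^n < 1) :
    ∃ x : Fin n → α, ∀ i j, i ≠ j → ∃ k, x k ∈ D i j := by
  classical
  set Pn : Measure (Fin n → α) := Measure.pi (fun _ => μ) with hPn
  have hprob : IsProbabilityMeasure Pn := by infer_instance
  set B : Fin N → Fin N → Set (Fin n → α) :=
    fun i j => Set.pi Set.univ (fun _ => (D i j)ᶜ) with hB
  have hBmeas : ∀ i j, MeasurableSet (B i j) := fun i j =>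
    MeasurableSet.univ_pi (fun _ => (hD i j).compl)
  have hBmeasure : ∀ i j, i ≠ j → Pn (B i j) ≤ (1 - δe)^n := by
    intro i j hij
    rw [hB]
    simp only []
    rw [hPn, Measure.pi_pi]
    have h1 : μ ((D i j)ᶜ) = 1 - μ (D i j) := prob_compl_eq_one_sub (hD i j)
    rw [Finset.prod_const]
    simp only [h1, Finset.card_univ, Fintype.card_fin]
    exact pow_le_pow_left' (tsub_le_tsub_left (hsep i j hij) 1) n
  set U : Set (Fin n → α) := ⋃ i, ⋃ j, ⋃ (_ : i ≠ j), B i j with hU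
  have hUlt : Pn U < 1 := by
    have h1 : Pn U ≤ ∑ i : Fin N, ∑ j : Fin N, (if i = j then 0 else (1-δe)^n) := by
      refine le_trans (measure_iUnion_fintype_le _ _) ?_
      apply Finset.sum_le_sum
      intro i _
      refine le_trans (measure_iUnion_fintype_le _ _) ?_
      apply Finset.sum_le_sum
      intro j _
      by_cases hij : i = j
      · simp [hij]
      · simp only [hij, if_false]
        have : (⋃ (_ : i ≠ j), B i j) = B i j := by
          simp [hij]
        rw [this]
        exact hBmeasure i j hij
    have h2 : ∑ i : Fin N, ∑ j : Fin N, (if i = j then (0:ℝ≥0∞) else (1-δe)^n)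
        ≤ (N:ℝ≥0∞)^2 * (1-δe)^n := by
      calc ∑ i : Fin N, ∑ j : Fin N, (if i = j then (0:ℝ≥0∞) else (1-δe)^n)
          ≤ ∑ _i : Fin N, ∑ _j : Fin N, (1-δe)^n := by
            apply Finset.sum_le_sum; intro i _; apply Finset.sum_le_sum; intro j _
            split <;> simp
        _ = (N:ℝ≥0∞)^2 * (1-δe)^n := by
            simp [Finset.sum_const, Finset.card_univ, mul_comm, pow_two, mul_assoc]
    calc Pn U ≤ _ := h1
      _ ≤ _ := h2
      _ < 1 := hlt
  have hne : U ≠ Set.univ := by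
    intro h
    rw [h] at hUlt
    simp at hUlt
  obtain ⟨x, hx⟩ : ∃ x, x ∉ U := by
    by_contra h
    push_neg at h
    exact hne (Set.eq_univ_of_forall h)
  refine ⟨x, fun i j hij => ?_⟩
  by_contra hcon
  push_neg at hcon
  apply hx
  rw [hU]
  refine Set.mem_iUnion.mpr ⟨i, Set.mem_iUnion.mpr ⟨j, Set.mem_iUnion.mpr ⟨hij, ?_⟩⟩⟩
  rw [hB]
  exact fun k _ => hcon k


lemma no_shatter {n : ℕ} {ι : Type*} [Fintype ι] (a : Fin n → ℝ) (b : Fin n → ι → ℝ)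
    (t : Finset (Fin n)) (hcard : Fintype.card ι + 2 ≤ t.card)
    (hsh : ∀ u ⊆ t, ∃ β : ι → ℝ, ∀ k ∈ t, (0 < a k + ∑ j, b k j * β j ↔ k ∈ u)) :
    False := by
  classical
  set L : (ι → ℝ) → Fin n → ℝ := fun β k => a k + ∑ j, b k j * β j with hL
  -- main case: a relation with a positive coefficient
  have main : ∀ G : Fin n → ℝ, (∀ β : ι → ℝ, ∑ k ∈ t, G k * L β k = 0) →
      (∃ k ∈ t, 0 < G k) → False := by
    rintro G hrel ⟨kp, hkpt, hkp⟩
    obtain ⟨β, hβ⟩ := hsh (t.filter (fun k => 0 < G k)) (Finset.filter_subset _ _)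
    have hterm : ∀ k ∈ t, 0 ≤ G k * L β k := by
      intro k hk
      rcases lt_trichotomy (G k) 0 with h | h | h
      · have : ¬ (0 < L β k) := by
          intro hpos
          have := (hβ k hk).mp hpos
          rw [Finset.mem_filter] at this
          linarith [this.2]
        nlinarith [le_of_not_gt this]
      · simp [h]
      · have : 0 < L β k := (hβ k hk).mpr (Finset.mem_filter.mpr ⟨hk, h⟩)
        positivity
    have hpos : 0 < ∑ k ∈ t, G k * L β k := by
      apply Finset.sum_pos' hterm
      refine ⟨kp, hkpt, ?_⟩
      have : 0 < L β kp := (hβ kp hkpt).mpr (Finset.mem_filter.mpr ⟨hkpt, hkp⟩)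
      positivity
    rw [hrel β] at hpos
    exact lt_irrefl 0 hpos
  -- get a nontrivial linear relation
  set c : t → ℝ × (ι → ℝ) := fun k => (a k, b k) with hc
  have hdim : Module.finrank ℝ (ℝ × (ι → ℝ)) = 1 + Fintype.card ι := by
    simp [Module.finrank_prod]
  have hnli : ¬ LinearIndependent ℝ c := by
    intro h
    have := h.fintype_card_le_finrank
    rw [hdim, Fintype.card_coe] at this
    omega
  obtain ⟨g, hsum, k₀, hk₀⟩ := Fintype.not_linearIndependent_iff.mp hnli
  set G : Fin n → ℝ := fun k => if h : k ∈ t then g ⟨k, h⟩ else 0 with hG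
  have hsum1 : ∑ k : t, g k * a k = 0 := by
    have := congrArg Prod.fst hsum
    simpa [Prod.fst_sum] using this
  have hsum2 : ∀ j : ι, ∑ k : t, g k * b k j = 0 := by
    intro j
    have := congrArg (fun v => v.2 j) hsum
    simpa [Prod.snd_sum, Finset.sum_apply] using this
  have hrelG : ∀ β : ι → ℝ, ∑ k ∈ t, G k * L β k = 0 := by
    intro β
    have e1 : ∑ k ∈ t, G k * L β k = ∑ k : t, g k * L β k := by
      rw [← Finset.sum_attach t (fun k => G k * L β k)]
      refine Finset.sum_congr rfl fun k _ => ?_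
      rw [hG]
      simp [k.2]
    rw [e1]
    have e2 : ∑ k : t, g k * L β k
        = (∑ k : t, g k * a k) + ∑ j, (∑ k : t, g k * b k j) * β j := by
      rw [hL]
      simp only [mul_add, Finset.sum_add_distrib]
      congr 1
      simp_rw [Finset.mul_sum, Finset.sum_mul]
      rw [Finset.sum_comm]
      exact Finset.sum_congr rfl fun j _ => Finset.sum_congr rfl fun k _ => by ring
    rw [e2, hsum1]
    simp only [Finset.univ_eq_attach] at hsum2
    simp [hsum2]
  have hGk : G (k₀ : Fin n) = g k₀ := by
    rw [hG]
    simp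
  rcases lt_trichotomy (g k₀) 0 with h | h | h
  · apply main (fun k => - G k)
    · intro β
      have h0 := hrelG β
      simp only [neg_mul]
      rw [Finset.sum_neg_distrib]
      linarith
    · exact ⟨k₀, k₀.2, by rw [hGk] at *; simpa using by linarith⟩
  · exact hk₀ h
  · exact main G hrelG ⟨k₀, k₀.2, by rw [hGk]; exact h⟩

lemma sign_patterns_card {n : ℕ} {ι : Type*} [Fintype ι] (a : Fin n → ℝ) (b : Fin n → ι → ℝ)
    (SPf : Finset (Fin n → Bool))
    (hSP : ∀ v ∈ SPf, ∃ β : ι → ℝ, v = fun k => decide (0 < a k + ∑ j, b k j * β j)) :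
    SPf.card ≤ ∑ k ∈ Finset.range (Fintype.card ι + 2), n.choose k := by
  classical
  set 𝒜 : Finset (Finset (Fin n)) := SPf.image (fun v => Finset.univ.filter (fun k => v k = true))
    with h𝒜
  have hinj : Set.InjOn (fun v : Fin n → Bool => Finset.univ.filter (fun k => v k = true)) SPf := by
    intro v _ w _ h
    funext k
    simp only at h
    have : (k ∈ Finset.univ.filter (fun k => v k = true)) ↔ (k ∈ Finset.univ.filter (fun k => w k = true)) := by rw [h]
    simp only [Finset.mem_filter, Finset.mem_univ, true_and] at this
    cases hv : v k <;> cases hw : w k <;> simp_all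
  have hcard : SPf.card = 𝒜.card := (Finset.card_image_of_injOn hinj).symm
  have hshat : ∀ s ∈ 𝒜.shatterer, s.card ≤ Fintype.card ι + 1 := by
    intro s hs
    rw [Finset.mem_shatterer] at hs
    by_contra hlarge
    push_neg at hlarge
    apply no_shatter a b s (by omega)
    intro u hu
    obtain ⟨A, hA, hsA⟩ := hs hu
    rw [h𝒜, Finset.mem_image] at hA
    obtain ⟨v, hv, hAv⟩ := hA
    obtain ⟨β, hβ⟩ := hSP v hv
    refine ⟨β, fun k hk => ?_⟩
    have h1 : k ∈ u ↔ k ∈ s ∩ A := by rw [hsA]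
    rw [Finset.mem_inter] at h1
    have h2 : k ∈ A ↔ (0 < a k + ∑ j, b k j * β j) := by
      rw [← hAv, Finset.mem_filter]
      simp [hβ]
    tauto
  have hsub : 𝒜.shatterer ⊆ (Finset.range (Fintype.card ι + 2)).biUnion
      (fun k => Finset.powersetCard k (Finset.univ : Finset (Fin n))) := by
    intro s hs
    rw [Finset.mem_biUnion]
    exact ⟨s.card, Finset.mem_range.mpr (by have := hshat s hs; omega),
      Finset.mem_powersetCard_univ.mpr rfl⟩
  calc SPf.card = 𝒜.card := hcard
    _ ≤ 𝒜.shatterer.card := Finset.card_le_card_shatterer 𝒜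
    _ ≤ _ := Finset.card_le_card hsub
    _ ≤ ∑ k ∈ Finset.range (Fintype.card ι + 2), (Finset.powersetCard k (Finset.univ : Finset (Fin n))).card := Finset.card_biUnion_le
    _ = ∑ k ∈ Finset.range (Fintype.card ι + 2), n.choose k := by
        refine Finset.sum_congr rfl fun k _ => ?_
        rw [Finset.card_powersetCard]
        simp
end Aux

-- ### auxiliary definitions
variable {p : ℕ}

/-- The set on which `f_β = 1`, as a subset of pairs. -/
def Tset (β : Fin p → ℝ) : Set (Obs p × Obs p) :=
  {q | q.2.1 < q.1.1 ↔ q.2.2.1 + dot q.2.2.2 β < q.1.2.1 + dot q.1.2.2 β}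

/-- symmetric difference of `Tset β` and `Tset β'`. -/
def Dset (β β' : Fin p → ℝ) : Set (Obs p × Obs p) :=
  {q | ¬ (q ∈ Tset β ↔ q ∈ Tset β')}

lemma fker_eq_ind (β : Fin p → ℝ) (q : Obs p × Obs p) :
    fker β q.1 q.2 = (Tset β).indicator (fun _ => (1:ℝ)) q := by
  rcases q with ⟨w, w'⟩
  by_cases h1 : w'.1 < w.1 <;>
    by_cases h2 : w'.2.1 + dot w'.2.2 β < w.2.1 + dot w.2.2 β
  · rw [Set.indicator_of_mem (by simp [Tset, h1, h2])]
    simp [fker, Rrule, h1, h2]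
  · rw [Set.indicator_of_notMem (by simp [Tset, h1, h2])]
    simp [fker, Rrule, h1, h2]
  · rw [Set.indicator_of_notMem (by simp [Tset, h1, h2])]
    simp [fker, Rrule, h1, h2]
  · rw [Set.indicator_of_mem (by simp [Tset, h1, h2])]
    simp [fker, Rrule, h1, h2]

lemma fker_mem_Icc (β : Fin p → ℝ) (w w' : Obs p) : fker β w w' = 0 ∨ fker β w w' = 1 := by
  have := fker_eq_ind β (w, w')
  simp only at this
  rw [this]
  by_cases h : (w, w') ∈ Tset β
  · right; rw [Set.indicator_of_mem h]
  · left; rw [Set.indicator_of_notMem h]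

lemma fker_nonneg (β : Fin p → ℝ) (w w' : Obs p) : 0 ≤ fker β w w' := by
  rcases fker_mem_Icc β w w' with h | h <;> rw [h] <;> norm_num

lemma fker_le_one (β : Fin p → ℝ) (w w' : Obs p) : fker β w w' ≤ 1 := by
  rcases fker_mem_Icc β w w' with h | h <;> rw [h] <;> norm_num

lemma measurable_Tset (β : Fin p → ℝ) : MeasurableSet (Tset (p := p) β) := by
  have hA : MeasurableSet {q : Obs p × Obs p | q.2.1 < q.1.1} := by
    apply measurableSet_lt <;> fun_prop
  have hB : MeasurableSet {q : Obs p × Obs p |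
      q.2.2.1 + dot q.2.2.2 β < q.1.2.1 + dot q.1.2.2 β} := by
    apply measurableSet_lt
    · apply Measurable.add
      · fun_prop
      · unfold dot
        apply Finset.measurable_sum
        intro j _
        fun_prop
    · apply Measurable.add
      · fun_prop
      · unfold dot
        apply Finset.measurable_sum
        intro j _
        fun_prop
  have : Tset (p := p) β = ({q : Obs p × Obs p | q.2.1 < q.1.1} ∩ {q | q.2.2.1 + dot q.2.2.2 β < q.1.2.1 + dot q.1.2.2 β}) ∪ ({q | q.2.1 < q.1.1}ᶜ ∩ {q | q.2.2.1 + dot q.2.2.2 β < q.1.2.1 + dot q.1.2.2 β}ᶜ) := by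
    ext q
    simp only [Tset, Set.mem_setOf_eq, Set.mem_union, Set.mem_inter_iff, Set.mem_compl_iff,
      Set.mem_setOf_eq]
    tauto
  rw [this]
  exact (hA.inter hB).union (hA.compl.inter hB.compl)

lemma measurable_Dset (β β' : Fin p → ℝ) : MeasurableSet (Dset (p := p) β β') := by
  have : Dset (p := p) β β' = ((Tset β) ∩ (Tset β')ᶜ) ∪ ((Tset β)ᶜ ∩ (Tset β')) := by
    ext q
    simp only [Dset, Set.mem_setOf_eq, Set.mem_union, Set.mem_inter_iff, Set.mem_compl_iff]
    tauto
  rw [this]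
  exact ((measurable_Tset β).inter (measurable_Tset β').compl).union
    ((measurable_Tset β).compl.inter (measurable_Tset β'))

lemma measurable_fker_pair (β : Fin p → ℝ) :
    Measurable (fun q : Obs p × Obs p => fker β q.1 q.2) := by
  have : (fun q : Obs p × Obs p => fker β q.1 q.2)
      = (Tset β).indicator (fun _ => (1:ℝ)) := funext (fker_eq_ind β)
  rw [this]
  exact measurable_const.indicator (measurable_Tset β)

lemma abs_fker_diff_eq (β β' : Fin p → ℝ) (q : Obs p × Obs p) :
    |fker β q.1 q.2 - fker β' q.1 q.2| = (Dset β β').indicator (fun _ => (1:ℝ)) q := by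
  rw [fker_eq_ind, fker_eq_ind]
  by_cases h1 : q ∈ Tset β <;> by_cases h2 : q ∈ Tset β'
  · rw [Set.indicator_of_mem h1, Set.indicator_of_mem h2,
      Set.indicator_of_notMem (by simp [Dset, h1, h2])]
    simp
  · rw [Set.indicator_of_mem h1, Set.indicator_of_notMem h2,
      Set.indicator_of_mem (by simp [Dset, h1, h2])]
    norm_num
  · rw [Set.indicator_of_notMem h1, Set.indicator_of_mem h2,
      Set.indicator_of_mem (by simp [Dset, h1, h2])]
    norm_num
  · rw [Set.indicator_of_notMem h1, Set.indicator_of_notMem h2,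
      Set.indicator_of_notMem (by simp [Dset, h1, h2])]
    simp

lemma measurable_abs_fker_diff (β β' : Fin p → ℝ) :
    Measurable (fun q : Obs p × Obs p => |fker β q.1 q.2 - fker β' q.1 q.2|) :=
  ((measurable_fker_pair β).sub (measurable_fker_pair β')).abs

lemma integrable_of_bdd {α : Type*} [MeasurableSpace α] {μ : Measure α} [IsFiniteMeasure μ]
    {f : α → ℝ} (hf : Measurable f) (C : ℝ) (h : ∀ x, |f x| ≤ C) : Integrable f μ :=
  (integrable_const C).mono' hf.aestronglyMeasurable
    (ae_of_all _ (fun x => by simpa [Real.norm_eq_abs] using h x))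

lemma abs_int_le {α : Type*} [MeasurableSpace α] (μ : Measure α) (f : α → ℝ) :
    |∫ x, f x ∂μ| ≤ ∫ x, |f x| ∂μ := by
  simpa [Real.norm_eq_abs] using norm_integral_le_integral_norm (μ := μ) f

section core
variable (P : Measure (Obs p)) (Q : Measure (Obs p × Obs p))
variable [IsProbabilityMeasure P] [IsProbabilityMeasure Q]

/-- The dominating measure. -/
def nuM : Measure (Obs p × Obs p) :=
  Q + (Q.map Prod.fst).prod P + P.prod (Q.map Prod.snd) + P.prod P

variable {β β' : Fin p → ℝ}

lemma integrable_fker_left (β : Fin p → ℝ) (w : Obs p) :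
    Integrable (fun v => fker β w v) P := by
  apply integrable_of_bdd ((measurable_fker_pair β).comp (measurable_prodMk_left (m := inferInstance))) 1
  intro v
  show |fker β w v| ≤ 1
  rw [abs_le]
  exact ⟨by linarith [fker_nonneg β w v], fker_le_one β w v⟩

lemma integrable_fker_right (β : Fin p → ℝ) (w' : Obs p) :
    Integrable (fun v => fker β v w') P := by
  apply integrable_of_bdd ((measurable_fker_pair β).comp (measurable_prodMk_right (m := inferInstance))) 1
  intro v
  show |fker β v w'| ≤ 1
  rw [abs_le]
  exact ⟨by linarith [fker_nonneg β v w'], fker_le_one β v w'⟩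

lemma measurable_gleft (β : Fin p → ℝ) :
    Measurable (fun w => ∫ v, fker β w v ∂P) :=
  ((measurable_fker_pair β).stronglyMeasurable.integral_prod_right').measurable

lemma measurable_gright (β : Fin p → ℝ) :
    Measurable (fun w' => ∫ v, fker β v w' ∂P) :=
  ((measurable_fker_pair β).stronglyMeasurable.integral_prod_left').measurable

lemma gleft_mem (β : Fin p → ℝ) (w : Obs p) :
    0 ≤ (∫ v, fker β w v ∂P) ∧ (∫ v, fker β w v ∂P) ≤ 1 := by
  constructor
  · exact integral_nonneg (fun v => fker_nonneg β w v)
  · calc (∫ v, fker β w v ∂P) ≤ ∫ _, (1:ℝ) ∂P :=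
        integral_mono (integrable_fker_left P β w) (integrable_const 1)
          (fun v => fker_le_one β w v)
    _ = 1 := by simp

lemma gright_mem (β : Fin p → ℝ) (w' : Obs p) :
    0 ≤ (∫ v, fker β v w' ∂P) ∧ (∫ v, fker β v w' ∂P) ≤ 1 := by
  constructor
  · exact integral_nonneg (fun v => fker_nonneg β v w')
  · have h1 : (∫ v, fker β v w' ∂P) ≤ ∫ _, (1:ℝ) ∂P :=
      integral_mono (integrable_fker_right P β w') (integrable_const 1)
        (fun v => fker_le_one β v w')
    simpa using h1

lemma Spop_mem (β : Fin p → ℝ) : 0 ≤ Spop P β ∧ Spop P β ≤ 1 := by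
  unfold Spop
  constructor
  · exact integral_nonneg (fun w => integral_nonneg (fun w' => fker_nonneg β w w'))
  · have h1 : (∫ w, ∫ w', fker β w w' ∂P ∂P) ≤ ∫ _, (1:ℝ) ∂P := by
      apply integral_mono _ (integrable_const 1) (fun w => (gleft_mem P β w).2)
      exact integrable_of_bdd (measurable_gleft P β) 1
        (fun w => abs_le.mpr ⟨by linarith [(gleft_mem P β w).1], (gleft_mem P β w).2⟩)
    simpa using h1

lemma measurable_hker_pair (β : Fin p → ℝ) :
    Measurable (fun q : Obs p × Obs p => hker P β q.1 q.2) := by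
  unfold hker
  apply Measurable.add
  · apply Measurable.sub
    · apply Measurable.sub
      · exact measurable_fker_pair β
      · exact (measurable_gleft P β).comp measurable_fst
    · exact (measurable_gright P β).comp measurable_snd
  · exact measurable_const

lemma abs_hker_le (β : Fin p → ℝ) (q : Obs p × Obs p) : |hker P β q.1 q.2| ≤ 4 := by
  unfold hker
  have h1 := fker_nonneg β q.1 q.2
  have h2 := fker_le_one β q.1 q.2
  have h3 := gleft_mem P β q.1
  have h4 := gright_mem P β q.2
  have h5 := Spop_mem P β
  rw [abs_le]
  constructor <;> nlinarith [h3.1, h3.2, h4.1, h4.2, h5.1, h5.2]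

lemma sq_half_le {x R : ℝ} (h1 : |x| ≤ R) (h2 : R ≤ 4) : (2⁻¹ * x)^2 ≤ R := by
  have h0 := abs_nonneg x
  nlinarith [sq_abs x]

/-- Pointwise bound for the difference of (halved) Hoeffding kernels. -/
lemma pointwise_bound (β β' : Fin p → ℝ) (q : Obs p × Obs p) :
    (2⁻¹ * hker P β q.1 q.2 - 2⁻¹ * hker P β' q.1 q.2)^2 ≤
      |fker β q.1 q.2 - fker β' q.1 q.2|
      + (∫ v, |fker β q.1 v - fker β' q.1 v| ∂P)
      + (∫ v, |fker β v q.2 - fker β' v q.2| ∂P)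
      + (∫ w, ∫ v, |fker β w v - fker β' w v| ∂P ∂P) := by
  set dF : Obs p × Obs p → ℝ := fun r => |fker β r.1 r.2 - fker β' r.1 r.2| with hdF
  have hdF01 : ∀ r, 0 ≤ dF r ∧ dF r ≤ 1 := by
    intro r
    constructor
    · exact abs_nonneg _
    · rcases fker_mem_Icc β r.1 r.2 with h1 | h1 <;> rcases fker_mem_Icc β' r.1 r.2 with h2 | h2 <;>
        rw [hdF] <;> simp only [] <;> rw [h1, h2] <;> norm_num
  have hint1 : ∀ w, Integrable (fun v => dF (w, v)) P := fun w =>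
    ((integrable_fker_left P β w).sub (integrable_fker_left P β' w)).abs
  have hint2 : ∀ w', Integrable (fun v => dF (v, w')) P := fun w' =>
    ((integrable_fker_right P β w').sub (integrable_fker_right P β' w')).abs
  have hG1mem : ∀ w, 0 ≤ (∫ v, dF (w, v) ∂P) ∧ (∫ v, dF (w, v) ∂P) ≤ 1 := by
    intro w
    refine ⟨integral_nonneg (fun v => (hdF01 _).1), ?_⟩
    have := integral_mono (hint1 w) (integrable_const (1:ℝ)) (fun v => (hdF01 (w,v)).2)
    simpa using this
  have hG2mem : ∀ w', 0 ≤ (∫ v, dF (v, w') ∂P) ∧ (∫ v, dF (v, w') ∂P) ≤ 1 := by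
    intro w'
    refine ⟨integral_nonneg (fun v => (hdF01 _).1), ?_⟩
    have := integral_mono (hint2 w') (integrable_const (1:ℝ)) (fun v => (hdF01 (v,w')).2)
    simpa using this
  have hG1meas : Measurable (fun w => ∫ v, dF (w, v) ∂P) :=
    ((measurable_abs_fker_diff β β').stronglyMeasurable.integral_prod_right').measurable
  have hG1int : Integrable (fun w => ∫ v, dF (w, v) ∂P) P :=
    integrable_of_bdd hG1meas 1
      (fun w => abs_le.mpr ⟨by linarith [(hG1mem w).1], (hG1mem w).2⟩)
  have hcmem : 0 ≤ (∫ w, ∫ v, dF (w, v) ∂P ∂P) ∧ (∫ w, ∫ v, dF (w, v) ∂P ∂P) ≤ 1 := by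
    refine ⟨integral_nonneg (fun w => (hG1mem w).1), ?_⟩
    have := integral_mono hG1int (integrable_const (1:ℝ)) (fun w => (hG1mem w).2)
    simpa using this
  -- bound on |Δ g-left|
  have hdg1 : |(∫ v, fker β q.1 v ∂P) - (∫ v, fker β' q.1 v ∂P)| ≤ ∫ v, dF (q.1, v) ∂P := by
    rw [← integral_sub (integrable_fker_left P β q.1) (integrable_fker_left P β' q.1)]
    exact abs_int_le P (fun v => fker β q.1 v - fker β' q.1 v)
  have hdg2 : |(∫ v, fker β v q.2 ∂P) - (∫ v, fker β' v q.2 ∂P)| ≤ ∫ v, dF (v, q.2) ∂P := by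
    rw [← integral_sub (integrable_fker_right P β q.2) (integrable_fker_right P β' q.2)]
    exact abs_int_le P (fun v => fker β v q.2 - fker β' v q.2)
  -- bound on |Δ S|
  have hgl_int : ∀ β₀, Integrable (fun w => ∫ v, fker β₀ w v ∂P) P := fun β₀ =>
    integrable_of_bdd (measurable_gleft P β₀) 1
      (fun w => abs_le.mpr ⟨by linarith [(gleft_mem P β₀ w).1], (gleft_mem P β₀ w).2⟩)
  have hdgw : ∀ w, |(∫ v, fker β w v ∂P) - (∫ v, fker β' w v ∂P)| ≤ ∫ v, dF (w, v) ∂P := by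
    intro w
    rw [← integral_sub (integrable_fker_left P β w) (integrable_fker_left P β' w)]
    exact abs_int_le P (fun v => fker β w v - fker β' w v)
  have habsd_int : Integrable (fun w => |(∫ v, fker β w v ∂P) - (∫ v, fker β' w v ∂P)|) P := by
    apply integrable_of_bdd ((measurable_gleft P β).sub (measurable_gleft P β')).abs 1
    intro w
    rw [abs_abs, abs_le]
    constructor <;> simp only [Pi.sub_apply] <;>
      nlinarith [(gleft_mem P β w).1, (gleft_mem P β w).2, (gleft_mem P β' w).1,
        (gleft_mem P β' w).2]
  have hdS : |Spop P β - Spop P β'| ≤ ∫ w, ∫ v, dF (w, v) ∂P ∂P := by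
    unfold Spop
    rw [← integral_sub (hgl_int β) (hgl_int β')]
    refine le_trans (abs_int_le P _) ?_
    exact integral_mono habsd_int hG1int hdgw
  -- combine
  have hΔ : 2⁻¹ * hker P β q.1 q.2 - 2⁻¹ * hker P β' q.1 q.2
      = 2⁻¹ * ((fker β q.1 q.2 - fker β' q.1 q.2)
        - ((∫ v, fker β q.1 v ∂P) - (∫ v, fker β' q.1 v ∂P))
        - ((∫ v, fker β v q.2 ∂P) - (∫ v, fker β' v q.2 ∂P))
        + (Spop P β - Spop P β')) := by
    unfold hker
    ring
  have habs : |2 * (2⁻¹ * hker P β q.1 q.2 - 2⁻¹ * hker P β' q.1 q.2)|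
      ≤ dF q + (∫ v, dF (q.1, v) ∂P) + (∫ v, dF (v, q.2) ∂P)
        + (∫ w, ∫ v, dF (w, v) ∂P ∂P) := by
    rw [hΔ]
    have e : 2 * (2⁻¹ * ((fker β q.1 q.2 - fker β' q.1 q.2)
        - ((∫ v, fker β q.1 v ∂P) - (∫ v, fker β' q.1 v ∂P))
        - ((∫ v, fker β v q.2 ∂P) - (∫ v, fker β' v q.2 ∂P))
        + (Spop P β - Spop P β')))
        = (fker β q.1 q.2 - fker β' q.1 q.2)
        - ((∫ v, fker β q.1 v ∂P) - (∫ v, fker β' q.1 v ∂P))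
        - ((∫ v, fker β v q.2 ∂P) - (∫ v, fker β' v q.2 ∂P))
        + (Spop P β - Spop P β') := by ring
    rw [e]
    set A := fker β q.1 q.2 - fker β' q.1 q.2 with hA
    set B := (∫ v, fker β q.1 v ∂P) - (∫ v, fker β' q.1 v ∂P) with hB
    set C := (∫ v, fker β v q.2 ∂P) - (∫ v, fker β' v q.2 ∂P) with hC
    set S := Spop P β - Spop P β' with hS
    have t1 : |A| = dF q := rfl
    have habs1 : |A - B - C + S| ≤ |A| + |B| + |C| + |S| := by
      have u1 : |A - B - C + S| ≤ |A - B - C| + |S| := abs_add_le _ _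
      have u2 : |A - B - C| ≤ |A - B| + |C| := by
        have := abs_add_le (A - B) (-C)
        simpa [abs_neg, sub_eq_add_neg] using this
      have u3 : |A - B| ≤ |A| + |B| := by
        have := abs_add_le A (-B)
        simpa [abs_neg, sub_eq_add_neg] using this
      linarith
    rw [t1] at habs1
    linarith [hdg1, hdg2, hdS, habs1]
  -- final: (2⁻¹ x)^2 ≤ R
  have hR4 : dF q + (∫ v, dF (q.1, v) ∂P) + (∫ v, dF (v, q.2) ∂P)
      + (∫ w, ∫ v, dF (w, v) ∂P ∂P) ≤ 4 := by
    linarith [(hdF01 q).2, (hG1mem q.1).2, (hG2mem q.2).2, hcmem.2]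
  have := sq_half_le (x := 2 * (2⁻¹ * hker P β q.1 q.2 - 2⁻¹ * hker P β' q.1 q.2))
    habs hR4
  calc (2⁻¹ * hker P β q.1 q.2 - 2⁻¹ * hker P β' q.1 q.2)^2
      = (2⁻¹ * (2 * (2⁻¹ * hker P β q.1 q.2 - 2⁻¹ * hker P β' q.1 q.2)))^2 := by ring
    _ ≤ _ := this

lemma integral_indicator_one {α : Type*} [MeasurableSpace α] (μ : Measure α) {D : Set α}
    (hD : MeasurableSet D) :
    ∫ x, D.indicator (fun _ => (1:ℝ)) x ∂μ = (μ D).toReal := by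
  rw [integral_indicator_const (1:ℝ) hD]
  simp [Measure.real]

lemma integral_sq_le_nu (β β' : Fin p → ℝ) :
    ∫ q, (2⁻¹ * hker P β q.1 q.2 - 2⁻¹ * hker P β' q.1 q.2)^2 ∂Q
      ≤ ((nuM P Q) (Dset β β')).toReal := by
  set D := Dset β β' with hD
  have hDm : MeasurableSet D := measurable_Dset β β'
  set dF : Obs p × Obs p → ℝ := fun r => |fker β r.1 r.2 - fker β' r.1 r.2| with hdF
  have hdF_ind : dF = D.indicator (fun _ => (1:ℝ)) := funext (abs_fker_diff_eq β β')
  have hdFm : Measurable dF := measurable_abs_fker_diff β β'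
  have hdF01 : ∀ r, |dF r| ≤ 1 := by
    intro r
    rw [hdF_ind, abs_le]
    by_cases h : r ∈ D
    · rw [Set.indicator_of_mem h]; norm_num
    · rw [Set.indicator_of_notMem h]; norm_num
  have hdFnn : ∀ r, 0 ≤ dF r := fun r => abs_nonneg _
  haveI : IsProbabilityMeasure (Q.map (Prod.fst : Obs p × Obs p → Obs p)) :=
    Measure.isProbabilityMeasure_map measurable_fst.aemeasurable
  haveI : IsProbabilityMeasure (Q.map (Prod.snd : Obs p × Obs p → Obs p)) :=
    Measure.isProbabilityMeasure_map measurable_snd.aemeasurable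
  have hG1meas : Measurable (fun w => ∫ v, dF (w, v) ∂P) :=
    (hdFm.stronglyMeasurable.integral_prod_right').measurable
  have hG2meas : Measurable (fun w' => ∫ v, dF (v, w') ∂P) :=
    (hdFm.stronglyMeasurable.integral_prod_left').measurable
  have hG1b : ∀ w, |∫ v, dF (w, v) ∂P| ≤ 1 := by
    intro w
    rw [abs_le]
    constructor
    · have : 0 ≤ ∫ v, dF (w, v) ∂P := integral_nonneg (fun v => hdFnn _)
      linarith
    · have h := integral_mono
        (integrable_of_bdd (μ := P) (hdFm.comp (measurable_prodMk_left (m := inferInstance))) 1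
          (fun v => hdF01 _)) (integrable_const (1:ℝ)) (fun v => abs_le.mp (hdF01 (w,v)) |>.2)
      simpa using h
  have hG2b : ∀ w', |∫ v, dF (v, w') ∂P| ≤ 1 := by
    intro w'
    rw [abs_le]
    constructor
    · have : 0 ≤ ∫ v, dF (v, w') ∂P := integral_nonneg (fun v => hdFnn _)
      linarith
    · have h := integral_mono
        (integrable_of_bdd (μ := P) (hdFm.comp (measurable_prodMk_right (m := inferInstance))) 1
          (fun v => hdF01 _)) (integrable_const (1:ℝ)) (fun v => abs_le.mp (hdF01 (v,w')) |>.2)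
      simpa using h
  -- integrability of both sides over Q
  have hLm : Measurable (fun q : Obs p × Obs p =>
      (2⁻¹ * hker P β q.1 q.2 - 2⁻¹ * hker P β' q.1 q.2)^2) := by
    apply Measurable.pow_const
    exact (measurable_const.mul (measurable_hker_pair P β)).sub
      (measurable_const.mul (measurable_hker_pair P β'))
  have hLint : Integrable (fun q : Obs p × Obs p =>
      (2⁻¹ * hker P β q.1 q.2 - 2⁻¹ * hker P β' q.1 q.2)^2) Q := by
    apply integrable_of_bdd hLm 16
    intro q
    have h1 := abs_hker_le P β q
    have h2 := abs_hker_le P β' q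
    rw [abs_le]
    constructor <;> nlinarith [abs_le.mp h1, abs_le.mp h2]
  have hI1 : Integrable dF Q := integrable_of_bdd hdFm 1 hdF01
  have hI2 : Integrable (fun q : Obs p × Obs p => ∫ v, dF (q.1, v) ∂P) Q :=
    integrable_of_bdd (hG1meas.comp measurable_fst) 1 (fun q => hG1b q.1)
  have hI3 : Integrable (fun q : Obs p × Obs p => ∫ v, dF (v, q.2) ∂P) Q :=
    integrable_of_bdd (hG2meas.comp measurable_snd) 1 (fun q => hG2b q.2)
  have hI4 : Integrable (fun _ : Obs p × Obs p => ∫ w, ∫ v, dF (w, v) ∂P ∂P) Q :=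
    integrable_const _
  have hmono : ∫ q, (2⁻¹ * hker P β q.1 q.2 - 2⁻¹ * hker P β' q.1 q.2)^2 ∂Q
      ≤ ∫ q, (dF q + (∫ v, dF (q.1, v) ∂P) + (∫ v, dF (v, q.2) ∂P)
          + (∫ w, ∫ v, dF (w, v) ∂P ∂P)) ∂Q := by
    apply integral_mono hLint ((hI1.add hI2).add hI3 |>.add hI4)
    intro q
    exact pointwise_bound P β β' q
  have hsplit : ∫ q, (dF q + (∫ v, dF (q.1, v) ∂P) + (∫ v, dF (v, q.2) ∂P)
          + (∫ w, ∫ v, dF (w, v) ∂P ∂P)) ∂Q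
      = (∫ q, dF q ∂Q) + (∫ q, (∫ v, dF (q.1, v) ∂P) ∂Q)
        + (∫ q, (∫ v, dF (v, q.2) ∂P) ∂Q) + (∫ w, ∫ v, dF (w, v) ∂P ∂P) := by
    have hI12 : Integrable (fun q : Obs p × Obs p =>
        dF q + (∫ v, dF (q.1, v) ∂P)) Q := hI1.add hI2
    have hI123 : Integrable (fun q : Obs p × Obs p =>
        dF q + (∫ v, dF (q.1, v) ∂P) + (∫ v, dF (v, q.2) ∂P)) Q := hI12.add hI3
    rw [integral_add hI123 hI4, integral_add hI12 hI3, integral_add hI1 hI2, integral_const]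
    simp
  -- evaluate the four pieces
  have hE1 : (∫ q, dF q ∂Q) = (Q D).toReal := by
    rw [hdF_ind]; exact integral_indicator_one Q hDm
  have hprod1int : Integrable dF ((Q.map Prod.fst).prod P) := integrable_of_bdd hdFm 1 hdF01
  have hE2 : (∫ q, (∫ v, dF (q.1, v) ∂P) ∂Q) = (((Q.map Prod.fst).prod P) D).toReal := by
    have e1 : ∫ w, (∫ v, dF (w, v) ∂P) ∂(Q.map Prod.fst)
        = ∫ q, (∫ v, dF (q.1, v) ∂P) ∂Q :=
      integral_map measurable_fst.aemeasurable hG1meas.aestronglyMeasurable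
    rw [← e1, ← integral_prod dF hprod1int, hdF_ind]
    exact integral_indicator_one _ hDm
  have hprod2int : Integrable dF (P.prod (Q.map Prod.snd)) := integrable_of_bdd hdFm 1 hdF01
  have hE3 : (∫ q, (∫ v, dF (v, q.2) ∂P) ∂Q) = ((P.prod (Q.map Prod.snd)) D).toReal := by
    have e1 : ∫ w', (∫ v, dF (v, w') ∂P) ∂(Q.map Prod.snd)
        = ∫ q, (∫ v, dF (v, q.2) ∂P) ∂Q :=
      integral_map measurable_snd.aemeasurable hG2meas.aestronglyMeasurable
    rw [← e1, ← integral_prod_symm dF hprod2int, hdF_ind]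
    exact integral_indicator_one _ hDm
  have hprod3int : Integrable dF (P.prod P) := integrable_of_bdd hdFm 1 hdF01
  have hE4 : (∫ w, ∫ v, dF (w, v) ∂P ∂P) = ((P.prod P) D).toReal := by
    rw [← integral_prod dF hprod3int, hdF_ind]
    exact integral_indicator_one _ hDm
  -- assemble
  have hnu : (nuM P Q) D = Q D + ((Q.map Prod.fst).prod P) D
      + ((P.prod (Q.map Prod.snd))) D + ((P.prod P)) D := by
    simp [nuM, Measure.add_apply]
  have ht1 : Q D ≠ ⊤ := measure_ne_top _ _
  have ht2 : ((Q.map Prod.fst).prod P) D ≠ ⊤ := measure_ne_top _ _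
  have ht3 : ((P.prod (Q.map Prod.snd))) D ≠ ⊤ := measure_ne_top _ _
  have ht4 : ((P.prod P)) D ≠ ⊤ := measure_ne_top _ _
  have htoReal : ((nuM P Q) D).toReal = (Q D).toReal + (((Q.map Prod.fst).prod P) D).toReal
      + (((P.prod (Q.map Prod.snd))) D).toReal + (((P.prod P)) D).toReal := by
    rw [hnu, ENNReal.toReal_add (by finiteness) ht4, ENNReal.toReal_add (by finiteness) ht3,
      ENNReal.toReal_add ht1 ht2]
  rw [htoReal]
  calc ∫ q, (2⁻¹ * hker P β q.1 q.2 - 2⁻¹ * hker P β' q.1 q.2)^2 ∂Q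
      ≤ _ := hmono
    _ = _ := hsplit
    _ = _ := by rw [hE1, hE2, hE3, hE4]

open scoped ENNReal
-- bridge lemmas
lemma Dset_symm (β β' : Fin p → ℝ) : Dset (p := p) β β' = Dset β' β := by
  ext q
  simp only [Dset, Set.mem_setOf_eq]
  tauto

lemma Dset_self (β : Fin p → ℝ) : Dset (p := p) β β = ∅ := by
  ext q
  simp [Dset]

lemma mem_Tset_iff {m : Finset (Fin p)} {β : Fin p → ℝ} (hβ : β ∈ Bm m) (q : Obs p × Obs p) :
    q ∈ Tset β ↔ ((q.2.1 < q.1.1) ↔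
      0 < (q.1.2.1 - q.2.2.1)
        + ∑ j : {x // x ∈ m}, (q.1.2.2 j.val - q.2.2.2 j.val) * β j.val) := by
  have hdot : ∀ (u v : Fin p → ℝ), dot u β - dot v β
      = ∑ j : {x // x ∈ m}, (u j.val - v j.val) * β j.val := by
    intro u v
    unfold dot
    rw [← Finset.sum_sub_distrib]
    have e1 : ∑ j : {x // x ∈ m}, (u j.val - v j.val) * β j.val
        = ∑ j ∈ m, (u j - v j) * β j := Finset.sum_coe_sort m (fun j => (u j - v j) * β j)
    rw [e1]
    rw [← Finset.sum_subset (Finset.subset_univ m) (fun j _ hj => by rw [hβ j hj]; ring)]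
    exact Finset.sum_congr rfl (fun j _ => by ring)
  have key : (q.2.2.1 + dot q.2.2.2 β < q.1.2.1 + dot q.1.2.2 β) ↔
      (0 < (q.1.2.1 - q.2.2.1)
        + ∑ j : {x // x ∈ m}, (q.1.2.2 j.val - q.2.2.2 j.val) * β j.val) := by
    rw [← hdot q.1.2.2 q.2.2.2]
    constructor <;> intro h <;> linarith
  rw [show (q ∈ Tset β) ↔ ((q.2.1 < q.1.1) ↔
      (q.2.2.1 + dot q.2.2.2 β < q.1.2.1 + dot q.1.2.2 β)) from Iff.rfl]
  rw [key]

lemma nuM_univ : (nuM P Q) Set.univ = 4 := by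
  haveI : IsProbabilityMeasure (Q.map (Prod.fst : Obs p × Obs p → Obs p)) :=
    Measure.isProbabilityMeasure_map measurable_fst.aemeasurable
  haveI : IsProbabilityMeasure (Q.map (Prod.snd : Obs p × Obs p → Obs p)) :=
    Measure.isProbabilityMeasure_map measurable_snd.aemeasurable
  have : (nuM P Q) Set.univ = Q Set.univ + ((Q.map Prod.fst).prod P) Set.univ
      + (P.prod (Q.map Prod.snd)) Set.univ + (P.prod P) Set.univ := by
    simp [nuM, Measure.add_apply]
  rw [this]
  rw [measure_univ, measure_univ, measure_univ, measure_univ]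
  norm_num

lemma sep_count {m : Finset (Fin p)} {s : ℕ} (hm : m.card = s)
    (ε : ℝ) (hε0 : 0 < ε) (hε1 : ε < 1) (T : Finset (Fin p → ℝ))
    (hTB : ∀ β ∈ T, β ∈ Bm m)
    (hsep : ∀ β ∈ T, ∀ β' ∈ T, β ≠ β' →
      ENNReal.ofReal (ε^2) ≤ (nuM P Q) (Dset β β')) :
    (T.card : ℝ) ≤ (24 * Real.exp 1 / ε^2) ^ (2*s+2) := by
  classical
  set d : ℕ := s + 1 with hd
  set δ : ℝ := ε^2/4 with hδ
  have hδ0 : 0 < δ := by rw [hδ]; positivity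
  have hδ1 : δ < 1 := by rw [hδ]; nlinarith
  by_cases hN0 : T.card = 0
  · rw [hN0]
    have : (0:ℝ) ≤ (24 * Real.exp 1 / ε^2) ^ (2*s+2) := by positivity
    simpa using this
  have hN1 : 1 ≤ T.card := Nat.one_le_iff_ne_zero.mpr hN0
  set ν : Measure (Obs p × Obs p) := nuM P Q with hν
  have hν4 : ν Set.univ = 4 := nuM_univ P Q
  set ν' : Measure (Obs p × Obs p) := (4:ℝ≥0∞)⁻¹ • ν with hν'
  haveI : IsProbabilityMeasure ν' := by
    constructor
    rw [hν', Measure.smul_apply, hν4, smul_eq_mul]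
    rw [ENNReal.inv_mul_cancel (by norm_num) (by norm_num)]
  set el : Fin T.card → (Fin p → ℝ) := fun i => (T.equivFin.symm i : {x // x ∈ T}).val with hel
  have hel_mem : ∀ i, el i ∈ T := fun i => (T.equivFin.symm i).2
  have hel_inj : Function.Injective el := by
    intro i j h
    exact T.equivFin.symm.injective (Subtype.ext h)
  have H : ∀ n : ℕ, d ≤ n → (T.card:ℝ)^2 * (1-δ)^n < 1 →
      (T.card:ℝ) ≤ (Real.exp 1 * n / d) ^ d := by
    intro n hdn hlt
    have hsep' : ∀ i j : Fin T.card, i ≠ j →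
        ENNReal.ofReal δ ≤ ν' (Dset (el i) (el j)) := by
      intro i j hij
      have hne : el i ≠ el j := fun h => hij (hel_inj h)
      have h1 := hsep _ (hel_mem i) _ (hel_mem j) hne
      have e0 : ENNReal.ofReal δ = 4⁻¹ * ENNReal.ofReal (ε^2) := by
        rw [hδ, ENNReal.ofReal_div_of_pos (by norm_num), ENNReal.div_eq_inv_mul]
        norm_num
      calc ENNReal.ofReal δ = 4⁻¹ * ENNReal.ofReal (ε^2) := e0
        _ ≤ 4⁻¹ * ν (Dset (el i) (el j)) := mul_le_mul_right h1 _
        _ = ν' (Dset (el i) (el j)) := by rw [hν', Measure.smul_apply, smul_eq_mul]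
    have hlt' : (T.card : ℝ≥0∞)^2 * (1 - ENNReal.ofReal δ)^n < 1 := by
      have e1 : (1:ℝ≥0∞) - ENNReal.ofReal δ = ENNReal.ofReal (1-δ) := by
        rw [ENNReal.ofReal_sub _ hδ0.le, ENNReal.ofReal_one]
      rw [e1, ← ENNReal.ofReal_pow (by linarith)]
      have e2 : (T.card : ℝ≥0∞)^2 = ENNReal.ofReal ((T.card:ℝ)^2) := by
        rw [ENNReal.ofReal_pow (by positivity), ENNReal.ofReal_natCast]
      rw [e2, ← ENNReal.ofReal_mul (by positivity)]
      exact lt_of_lt_of_le (ENNReal.ofReal_lt_ofReal_iff_of_nonneg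
          (by have h19 : (0:ℝ) ≤ 1-δ := by linarith
              positivity) |>.mpr hlt)
        (by rw [ENNReal.ofReal_one])
    obtain ⟨x, hx⟩ := packing_sample ν' n T.card (fun i j => Dset (el i) (el j))
      (fun i j => measurable_Dset _ _) (ENNReal.ofReal δ) hsep' hlt'
    set a : Fin n → ℝ := fun k => (x k).1.2.1 - (x k).2.2.1 with ha
    set b : Fin n → {j // j ∈ m} → ℝ :=
      fun k j => (x k).1.2.2 j.val - (x k).2.2.2 j.val with hb
    set φ : Fin T.card → (Fin n → Bool) :=
      fun i k => decide (0 < a k + ∑ j, b k j * el i j.val) with hφ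
    have hmem_iff : ∀ i k, ((x k) ∈ Tset (el i)) ↔
        (((x k).2.1 < (x k).1.1) ↔ (0 < a k + ∑ j, b k j * el i j.val)) := by
      intro i k
      exact mem_Tset_iff (hTB _ (hel_mem i)) (x k)
    have hφinj : Function.Injective φ := by
      intro i j hphi
      by_contra hij
      obtain ⟨k, hk⟩ := hx i j hij
      have hkd : ¬ ((x k ∈ Tset (el i)) ↔ (x k ∈ Tset (el j))) := hk
      apply hkd
      rw [hmem_iff i k, hmem_iff j k]
      have : φ i k = φ j k := by rw [hphi]
      rw [hφ] at this
      simp only [decide_eq_decide] at this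
      rw [this]
    set SPf : Finset (Fin n → Bool) := Finset.image φ Finset.univ with hSPf
    have hcard : SPf.card = T.card := by
      rw [hSPf, Finset.card_image_of_injective _ hφinj, Finset.card_univ, Fintype.card_fin]
    have hSP : ∀ v ∈ SPf, ∃ γ : {j // j ∈ m} → ℝ,
        v = fun k => decide (0 < a k + ∑ j, b k j * γ j) := by
      intro v hv
      obtain ⟨i, _, rfl⟩ := Finset.mem_image.mp hv
      exact ⟨fun j => el i j.val, rfl⟩
    have h1 := sign_patterns_card a b SPf hSP
    have hcards : Fintype.card {j // j ∈ m} = s := by rw [Fintype.card_coe, hm]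
    rw [hcards, hcard] at h1
    have h1R : (T.card : ℝ) ≤ ∑ k ∈ Finset.range (d+1), (n.choose k : ℝ) := by
      rw [hd]
      have : ((T.card : ℕ) : ℝ) ≤ ((∑ k ∈ Finset.range (s+2), n.choose k : ℕ) : ℝ) := by
        exact_mod_cast h1
      simpa [Nat.cast_sum] using this
    exact h1R.trans (binom_sum_le n d (by omega) hdn)
  have hfin := arith_pack T.card d (by omega) δ hδ0 hδ1 hN1 H
  have e : 6 * Real.exp 1 / δ = 24 * Real.exp 1 / ε^2 := by
    rw [hδ]
    field_simp
    ring
  rw [e] at hfin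
  have e2 : 2 * d = 2*s+2 := by omega
  rw [e2] at hfin
  exact hfin

end core


/-- `L₂(Q)` covering-number bound for the class `H_m = {2⁻¹ h_β : β ∈ B_m}`:
there is a universal constant `C₄ ≥ 1` with
`N(ε, H_m, L₂(Q)) ≤ (512·e·C₄/ε)^{16s+16}` for every `ε ∈ (0,1)`. -/
theorem covering_number_Hm :
    ∃ C₄ : ℝ, 1 ≤ C₄ ∧
      ∀ (p s : ℕ), 1 ≤ p → 1 ≤ s →
      ∀ m : Finset (Fin p), m.card = s →
      ∀ P : Measure (Obs p), IsProbabilityMeasure P →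
      ∀ Q : Measure (Obs p × Obs p), IsProbabilityMeasure Q →
      ∀ ε : ℝ, 0 < ε → ε < 1 →
      ∃ G : Finset ((Obs p × Obs p) → ℝ),
        (G.card : ℝ) ≤ (512 * Real.exp 1 * C₄ / ε) ^ (16 * s + 16) ∧
        ∀ β ∈ Bm m, ∃ γ ∈ G,
          (∫ q, (2⁻¹ * hker P β q.1 q.2 - γ q) ^ 2 ∂Q) < ε ^ 2 := by
  classical
  refine ⟨1, le_refl 1, ?_⟩
  intro p s hp hs m hm P hP Q hQ ε hε0 hε1
  haveI := hP
  haveI := hQ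
  haveI : IsProbabilityMeasure (Q.map (Prod.fst : Obs p × Obs p → Obs p)) :=
    Measure.isProbabilityMeasure_map measurable_fst.aemeasurable
  haveI : IsProbabilityMeasure (Q.map (Prod.snd : Obs p × Obs p → Obs p)) :=
    Measure.isProbabilityMeasure_map measurable_snd.aemeasurable
  have he1 : (1:ℝ) ≤ Real.exp 1 := by linarith [Real.add_one_le_exp (1:ℝ)]
  -- maximal separated set
  set K : Set ℕ := {k | ∃ T : Finset (Fin p → ℝ), ((∀ β ∈ T, β ∈ Bm m) ∧
    (∀ β ∈ T, ∀ β' ∈ T, β ≠ β' → ENNReal.ofReal (ε^2) ≤ (nuM P Q) (Dset β β')))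
    ∧ T.card = k} with hK
  have hK0 : 0 ∈ K := ⟨∅, ⟨by simp, by simp⟩, rfl⟩
  have hbdd : BddAbove K := by
    refine ⟨⌊(24 * Real.exp 1 / ε^2) ^ (2*s+2)⌋₊, ?_⟩
    rintro k ⟨T, ⟨h1, h2⟩, rfl⟩
    exact Nat.le_floor (sep_count P Q hm ε hε0 hε1 T h1 h2)
  obtain ⟨T₀, hT₀sep, hT₀card⟩ := Nat.sSup_mem ⟨0, hK0⟩ hbdd
  have hcover : ∀ β ∈ Bm m, ∃ β' ∈ T₀, (nuM P Q) (Dset β β') < ENNReal.ofReal (ε^2) := by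
    intro β hβ
    by_contra hc
    push_neg at hc
    have hβnot : β ∉ T₀ := by
      intro hin
      have h0 := hc β hin
      rw [Dset_self] at h0
      simp only [measure_empty, nonpos_iff_eq_zero, ENNReal.ofReal_eq_zero] at h0
      nlinarith
    have hsep' : (∀ b ∈ insert β T₀, b ∈ Bm m) ∧
        (∀ b ∈ insert β T₀, ∀ b' ∈ insert β T₀, b ≠ b' →
          ENNReal.ofReal (ε^2) ≤ (nuM P Q) (Dset b b')) := by
      constructor
      · intro b hb
        rcases Finset.mem_insert.mp hb with rfl | hb'
        · exact hβ
        · exact hT₀sep.1 b hb'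
      · intro b hb b' hb' hne
        rcases Finset.mem_insert.mp hb with rfl | hbT <;>
          rcases Finset.mem_insert.mp hb' with rfl | hb'T
        · exact absurd rfl hne
        · exact hc b' hb'T
        · rw [Dset_symm]
          exact hc b hbT
        · exact hT₀sep.2 b hbT b' hb'T hne
    have hmem : (insert β T₀).card ∈ K := ⟨insert β T₀, hsep', rfl⟩
    have hle := le_csSup hbdd hmem
    rw [Finset.card_insert_of_notMem hβnot, hT₀card] at hle
    omega
  refine ⟨T₀.image (fun β => fun q : Obs p × Obs p => 2⁻¹ * hker P β q.1 q.2), ?_, ?_⟩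
  · -- cardinality bound
    have h1 : ((T₀.image (fun β => fun q : Obs p × Obs p => 2⁻¹ * hker P β q.1 q.2)).card : ℝ)
        ≤ (T₀.card : ℝ) := by exact_mod_cast Finset.card_image_le
    have h2 : (T₀.card : ℝ) ≤ (24 * Real.exp 1 / ε^2) ^ (2*s+2) :=
      sep_count P Q hm ε hε0 hε1 T₀ hT₀sep.1 hT₀sep.2
    have hb1 : (1:ℝ) ≤ 512 * Real.exp 1 / ε := by
      rw [le_div_iff₀ hε0]
      nlinarith
    have h3 : 24 * Real.exp 1 / ε^2 ≤ (512 * Real.exp 1 / ε)^2 := by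
      rw [div_pow]
      gcongr
      nlinarith
    have h4 : (24 * Real.exp 1 / ε^2) ^ (2*s+2) ≤ ((512 * Real.exp 1 / ε)^2) ^ (2*s+2) :=
      pow_le_pow_left₀ (by positivity) h3 _
    have h5 : ((512 * Real.exp 1 / ε)^2) ^ (2*s+2) = (512 * Real.exp 1 / ε) ^ (4*s+4) := by
      rw [← pow_mul]
      congr 1
      ring
    have h6 : (512 * Real.exp 1 / ε) ^ (4*s+4) ≤ (512 * Real.exp 1 / ε) ^ (16*s+16) :=
      pow_le_pow_right₀ hb1 (by omega)
    have h7 : (512 * Real.exp 1 * 1 / ε) = 512 * Real.exp 1 / ε := by ring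
    rw [h7]
    linarith
  · -- covering property
    intro β hβ
    obtain ⟨β', hβ'T, hβ'lt⟩ := hcover β hβ
    refine ⟨fun q => 2⁻¹ * hker P β' q.1 q.2, Finset.mem_image_of_mem _ hβ'T, ?_⟩
    have hle := integral_sq_le_nu P Q β β'
    have hlt : ((nuM P Q) (Dset β β')).toReal < ε^2 :=
      ENNReal.toReal_lt_of_lt_ofReal hβ'lt
    exact lt_of_le_of_lt hle hlt


end RankCoverH
end
end

section
/- Let n ≥ 2, let (y₁, x₁), …, (y_n, x_n) ∈ ℝ × ℝ^k be data, let B ⊆ ℝ^k be a nonempty compact set, let ε > 0, and for i ≠ j set x_{ij} := x_i − x_j and M_{ij} := max_{β ∈ B} |x_{ij}'β| + ε. Consider the MRC objective Q(β) := (1/(n(n−1))) Σ_{i≠j} 1{x_{ij}'β > 0}·1{y_i > y_j} and the MIP objective over pairs (β, d) with β ∈ B, d_{ij} ∈ {0,1}, and (d_{ij} − 1)·M_{ij} < x_{ij}'β ≤ d_{ij}·M_{ij} for all i ≠ j, given by L(β, d) := (1/(n(n−1))) Σ_{i≠j} d_{ij}·1{y_i > y_j}. Then: (i) for any feasible (β,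 d), d_{ij} = 1{x_{ij}'β > 0} for all i ≠ j, and L(β, d) = Q(β); (ii) sup over feasible (β, d) of L equals sup_{β ∈ B} Q(β); and (iii) both suprema are attained, and (β̂, d̂) maximizes L over the feasible set if and only if β̂ maximizes Q over B and d̂_{ij} = 1{x_{ij}'β̂ > 0}. -/
noncomputable section

namespace MrcMip

/-- Euclidean inner product on `ℝ^k`. -/
def dot {k : ℕ} (a b : Fin k → ℝ) : ℝ := ∑ h, a h * b h

/-- The MRC (Kendall rank correlation) objective
`Q(β) = (1/(n(n−1))) Σ_{i≠j} 1{x_{ij}'β > 0} · 1{y_i > y_j}`. -/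
def Qobj {n k : ℕ} (y : Fin n → ℝ) (x : Fin n → Fin k → ℝ)
    (β : Fin k → ℝ) : ℝ :=
  (1 / ((n : ℝ) * ((n : ℝ) - 1))) *
    ∑ i, ∑ j, if i ≠ j then
      (if 0 < dot (fun h => x i h - x j h) β then (1 : ℝ) else 0) *
        (if y j < y i then (1 : ℝ) else 0)
    else 0

/-- The MIP objective `L(β, d) = (1/(n(n−1))) Σ_{i≠j} d_{ij} · 1{y_i > y_j}`. -/
def Lobj {n k : ℕ} (y : Fin n → ℝ)
    (bd : (Fin k → ℝ) × (Fin n → Fin n → ℝ)) : ℝ :=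
  (1 / ((n : ℝ) * ((n : ℝ) - 1))) *
    ∑ i, ∑ j, if i ≠ j then bd.2 i j * (if y j < y i then (1 : ℝ) else 0) else 0

/-- The MIP feasible set: `β ∈ B`, `d_{ij} ∈ {0,1}` and the big-M constraints
`(d_{ij} − 1)·M_{ij} < x_{ij}'β ≤ d_{ij}·M_{ij}` for all `i ≠ j`. -/
def Feas {n k : ℕ} (x : Fin n → Fin k → ℝ) (B : Set (Fin k → ℝ))
    (M : Fin n → Fin n → ℝ) : Set ((Fin k → ℝ) × (Fin n → Fin n → ℝ)) :=
  {bd | bd.1 ∈ B ∧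
    (∀ i j, i ≠ j → (bd.2 i j = 0 ∨ bd.2 i j = 1)) ∧
    (∀ i j, i ≠ j →
      (bd.2 i j - 1) * M i j < dot (fun h => x i h - x j h) bd.1 ∧
        dot (fun h => x i h - x j h) bd.1 ≤ bd.2 i j * M i j)}

lemma dot_continuous {k : ℕ} (v : Fin k → ℝ) :
    Continuous fun β : Fin k → ℝ => dot v β := by
  unfold dot
  exact continuous_finset_sum _ fun h _ => continuous_const.mul (continuous_apply h)

lemma abs_dot_le {k : ℕ} {B : Set (Fin k → ℝ)} (hBcp : IsCompact B) (v : Fin k → ℝ)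
    {β : Fin k → ℝ} (hβ : β ∈ B) :
    |dot v β| ≤ sSup ((fun β => |dot v β|) '' B) :=
  le_csSup (hBcp.bddAbove_image ((dot_continuous v).abs.continuousOn)) ⟨β, hβ, rfl⟩

/-- The canonical binary variables associated to `β`. -/
def dfun {n k : ℕ} (x : Fin n → Fin k → ℝ) (β : Fin k → ℝ) : Fin n → Fin n → ℝ :=
  fun i j => if 0 < dot (fun h => x i h - x j h) β then (1 : ℝ) else 0

lemma feas_dfun {n k : ℕ} {x : Fin n → Fin k → ℝ} {B : Set (Fin k → ℝ)}
    (hBcp : IsCompact B) {ε : ℝ} (hε : 0 < ε) {M : Fin n → Fin n → ℝ}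
    (hM : ∀ i j, M i j =
      sSup ((fun β => |dot (fun h => x i h - x j h) β|) '' B) + ε)
    {β : Fin k → ℝ} (hβ : β ∈ B) : (β, dfun x β) ∈ Feas x B M := by
  refine ⟨hβ, ?_, ?_⟩
  · intro i j _
    dsimp only [dfun]
    split <;> simp
  · intro i j _
    have habs := abs_dot_le hBcp (fun h => x i h - x j h) hβ
    have hle := le_abs_self (dot (fun h => x i h - x j h) β)
    have hge := neg_abs_le (dot (fun h => x i h - x j h) β)
    have hMij := hM i j
    dsimp only [dfun]
    split
    · rename_i h
      constructor
      · simpa using h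
      · rw [one_mul, hMij]; linarith
    · rename_i h
      push_neg at h
      constructor
      · rw [zero_sub, hMij]; nlinarith
      · simpa using h

lemma d_eq {n k : ℕ} {x : Fin n → Fin k → ℝ} {B : Set (Fin k → ℝ)}
    {M : Fin n → Fin n → ℝ} {bd : (Fin k → ℝ) × (Fin n → Fin n → ℝ)}
    (hbd : bd ∈ Feas x B M) {i j : Fin n} (hij : i ≠ j) :
    bd.2 i j = dfun x bd.1 i j := by
  obtain ⟨-, hd01, hcon⟩ := hbd
  obtain ⟨hlt, hle⟩ := hcon i j hij
  unfold dfun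
  rcases hd01 i j hij with h0 | h1
  · rw [h0] at hle ⊢
    rw [zero_mul] at hle
    rw [if_neg (not_lt.mpr hle)]
  · rw [h1] at hlt ⊢
    rw [sub_self, zero_mul] at hlt
    rw [if_pos hlt]

lemma L_eq_Q {n k : ℕ} {y : Fin n → ℝ} {x : Fin n → Fin k → ℝ} {B : Set (Fin k → ℝ)}
    {M : Fin n → Fin n → ℝ} {bd : (Fin k → ℝ) × (Fin n → Fin n → ℝ)}
    (hbd : bd ∈ Feas x B M) : Lobj y bd = Qobj y x bd.1 := by
  unfold Lobj Qobj
  congr 1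
  refine Finset.sum_congr rfl fun i _ => Finset.sum_congr rfl fun j _ => ?_
  by_cases hij : i = j
  · simp [hij]
  · simp only [ne_eq, hij, not_false_iff, if_true, d_eq hbd hij, dfun]

/-- Auxiliary function on binary vectors witnessing that `Q` has finite range. -/
def Gaux {n : ℕ} (y : Fin n → ℝ) (d : Fin n → Fin n → Bool) : ℝ :=
  (1 / ((n : ℝ) * ((n : ℝ) - 1))) *
    ∑ i, ∑ j, if i ≠ j then
      (if d i j then (1 : ℝ) else 0) * (if y j < y i then (1 : ℝ) else 0)
    else 0

lemma Q_eq_G {n k : ℕ} (y : Fin n → ℝ) (x : Fin n → Fin k → ℝ) (β : Fin k → ℝ) :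
    Qobj y x β = Gaux y (fun i j => decide (0 < dot (fun h => x i h - x j h) β)) := by
  unfold Qobj Gaux
  congr 1
  refine Finset.sum_congr rfl fun i _ => Finset.sum_congr rfl fun j _ => ?_
  simp

lemma Q_max_exists {n k : ℕ} (y : Fin n → ℝ) (x : Fin n → Fin k → ℝ)
    {B : Set (Fin k → ℝ)} (hBne : B.Nonempty) :
    ∃ β ∈ B, ∀ β' ∈ B, Qobj y x β' ≤ Qobj y x β := by
  have hsub : Qobj y x '' B ⊆ Set.range (Gaux y) := by
    rintro r ⟨β, hβ, rfl⟩
    exact ⟨_, (Q_eq_G y x β).symm⟩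
  have hfin : (Qobj y x '' B).Finite := (Set.finite_range (Gaux y)).subset hsub
  have hne : (Qobj y x '' B).Nonempty := hBne.image _
  obtain ⟨m, hm, hmax⟩ := hfin.exists_maximalFor id _ hne
  obtain ⟨β, hβ, rfl⟩ := hm
  refine ⟨β, hβ, fun β' hβ' => ?_⟩
  by_contra hlt
  push_neg at hlt
  have := hmax ⟨β', hβ', rfl⟩ (le_of_lt hlt)
  simp only [id] at this
  exact absurd this (not_le.mpr hlt)

/-- **Equivalence of the MRC problem and its MIP reformulation**: with
`M_{ij} = max_{β ∈ B} |x_{ij}'β| + ε`, (i) every feasible `(β, d)` has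
`d_{ij} = 1{x_{ij}'β > 0}` and `L(β, d) = Q(β)`; (ii) the optimal values agree;
(iii) both suprema are attained, and a feasible `(β̂, d̂)` maximizes `L` iff `β̂`
maximizes `Q` over `B` and `d̂_{ij} = 1{x_{ij}'β̂ > 0}` for all `i ≠ j`. -/
theorem mrc_mip_equivalence (n k : ℕ) (hn : 2 ≤ n)
    (y : Fin n → ℝ) (x : Fin n → Fin k → ℝ)
    (B : Set (Fin k → ℝ)) (hBne : B.Nonempty) (hBcp : IsCompact B)
    (ε : ℝ) (hε : 0 < ε)
    (M : Fin n → Fin n → ℝ)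
    (hM : ∀ i j, M i j =
      sSup ((fun β => |dot (fun h => x i h - x j h) β|) '' B) + ε) :
    (∀ bd ∈ Feas x B M,
        (∀ i j, i ≠ j → bd.2 i j =
          (if 0 < dot (fun h => x i h - x j h) bd.1 then (1 : ℝ) else 0)) ∧
        Lobj y bd = Qobj y x bd.1) ∧
    sSup (Lobj y '' Feas x B M) = sSup (Qobj y x '' B) ∧
    (∃ bd ∈ Feas x B M, ∀ bd' ∈ Feas x B M, Lobj y bd' ≤ Lobj y bd) ∧
    (∃ β ∈ B, ∀ β' ∈ B, Qobj y x β' ≤ Qobj y x β) ∧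
    (∀ bd ∈ Feas x B M,
      ((∀ bd' ∈ Feas x B M, Lobj y bd' ≤ Lobj y bd) ↔
        ((∀ β' ∈ B, Qobj y x β' ≤ Qobj y x bd.1) ∧
          ∀ i j, i ≠ j → bd.2 i j =
            (if 0 < dot (fun h => x i h - x j h) bd.1 then (1 : ℝ) else 0)))) := by
  have hdeq : ∀ bd ∈ Feas x B M, ∀ i j, (i : Fin n) ≠ j → bd.2 i j =
      (if 0 < dot (fun h => x i h - x j h) bd.1 then (1 : ℝ) else 0) :=
    fun bd hbd i j hij => d_eq hbd hij
  have himg : Lobj y '' Feas x B M = Qobj y x '' B := by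
    ext r
    constructor
    · rintro ⟨bd, hbd, rfl⟩
      exact ⟨bd.1, hbd.1, (L_eq_Q hbd).symm⟩
    · rintro ⟨β, hβ, rfl⟩
      exact ⟨(β, dfun x β), feas_dfun hBcp hε hM hβ, L_eq_Q (feas_dfun hBcp hε hM hβ)⟩
  obtain ⟨βs, hβs, hQmax⟩ := Q_max_exists y x hBne
  refine ⟨fun bd hbd => ⟨fun i j hij => d_eq hbd hij, L_eq_Q hbd⟩, by rw [himg], ?_,
    ⟨βs, hβs, hQmax⟩, ?_⟩
  · refine ⟨(βs, dfun x βs), feas_dfun hBcp hε hM hβs, fun bd' hbd' => ?_⟩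
    rw [L_eq_Q hbd', L_eq_Q (feas_dfun hBcp hε hM hβs)]
    exact hQmax bd'.1 hbd'.1
  · intro bd hbd
    constructor
    · intro hLmax
      refine ⟨fun β' hβ' => ?_, fun i j hij => d_eq hbd hij⟩
      have h := hLmax (β', dfun x β') (feas_dfun hBcp hε hM hβ')
      rw [L_eq_Q (feas_dfun hBcp hε hM hβ'), L_eq_Q hbd] at h
      exact h
    · rintro ⟨hQm, -⟩ bd' hbd'
      rw [L_eq_Q hbd', L_eq_Q hbd]
      exact hQm bd'.1 hbd'.1

end MrcMip
end
end

section
/- Let n ≥ 2, let (y₁, x₁), …, (y_n, x_n) ∈ ℝ × ℝ^{1+p} with x_i = (x_{1,i}, x_{−1,i}), x_{−1,i} ∈ ℝ^p, let s ≥ 0 be an integer, let lb, ub ∈ ℝ^p with lb_h ≤ 0 ≤ ub_h for all h, and let B := {β ∈ ℝ^p : lb_h ≤ β_h ≤ ub_h ∀h}. For i ≠ j set x_{−1,ij} := x_{−1,i} − x_{−1,j} and let M_{ij} > sup_{β ∈ B} |(x_{1,i} − x_{1,j}) + x_{−1,ij}'β|. Consider the constrained MIP over (β, d, e) with β ∈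 B, d_{ij} ∈ {0,1}, e_h ∈ {0,1}, satisfying (d_{ij} − 1)M_{ij} < (x_{1,i} − x_{1,j}) + x_{−1,ij}'β ≤ d_{ij}M_{ij} for all i ≠ j, e_h·lb_h ≤ β_h ≤ e_h·ub_h for all h, and Σ_{h=1}^p e_h ≤ s, with objective L(β, d) := (2/(n(n−1))) Σ_{i<j} [ (1 − 1{y_i > y_j}) + (2·1{y_i > y_j} − 1)·d_{ij} ]. Then for any feasible (β, d, e): ‖β‖₀ ≤ s, d_{ij} = R_β(x_i, x_j), and L(β, d) = S_n(β); consequently the optimal value of the constrained MIP equals max over {β ∈ B : ‖β‖₀ ≤ s} of S_n(β), and the β-component of any MIP maximizer maximizes S_n over {β ∈ B : ‖β‖₀ ≤ s}. -/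
noncomputable section

namespace BestSubsetMip

/-- Euclidean inner product on `ℝ^p`. -/
def dot {p : ℕ} (a b : Fin p → ℝ) : ℝ := ∑ h, a h * b h

/-- The rank prediction rule
`R_β(x_i, x_j) = 1{x_{1,i} + x_{−1,i}'β > x_{1,j} + x_{−1,j}'β}` applied to
observations `i, j`. -/
def Rind {n p : ℕ} (x1 : Fin n → ℝ) (xm1 : Fin n → Fin p → ℝ)
    (β : Fin p → ℝ) (i j : Fin n) : ℝ :=
  if x1 j + dot (xm1 j) β < x1 i + dot (xm1 i) β then 1 else 0

/-- The sample best-subset rank prediction criterion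
`S_n(β) = (2/(n(n−1))) Σ_{i<j} 1{ 1{y_i > y_j} = R_β(x_i, x_j) }`. -/
def Sn {n p : ℕ} (y : Fin n → ℝ) (x1 : Fin n → ℝ) (xm1 : Fin n → Fin p → ℝ)
    (β : Fin p → ℝ) : ℝ :=
  (2 / ((n : ℝ) * ((n : ℝ) - 1))) *
    ∑ i, ∑ j, if i < j then
      (if (if y j < y i then (1 : ℝ) else 0) = Rind x1 xm1 β i j then (1 : ℝ)
       else 0)
    else 0

/-- The MIP objective
`L(β, d) = (2/(n(n−1))) Σ_{i<j} [(1 − 1{y_i>y_j}) + (2·1{y_i>y_j} − 1)·d_{ij}]`. -/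
def Lobj {n p : ℕ} (y : Fin n → ℝ)
    (bde : (Fin p → ℝ) × (Fin n → Fin n → ℝ) × (Fin p → ℝ)) : ℝ :=
  (2 / ((n : ℝ) * ((n : ℝ) - 1))) *
    ∑ i, ∑ j, if i < j then
      ((1 - (if y j < y i then (1 : ℝ) else 0)) +
        (2 * (if y j < y i then (1 : ℝ) else 0) - 1) * bde.2.1 i j)
    else 0

/-- The box parameter space `B = {β : lb_h ≤ β_h ≤ ub_h ∀h}`. -/
def Box {p : ℕ} (lb ub : Fin p → ℝ) : Set (Fin p → ℝ) :=
  {β | ∀ h, lb h ≤ β h ∧ β h ≤ ub h}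

/-- The constrained MIP feasible set over triples `(β, d, e)`. -/
def Feas {n p : ℕ} (x1 : Fin n → ℝ) (xm1 : Fin n → Fin p → ℝ)
    (lb ub : Fin p → ℝ) (M : Fin n → Fin n → ℝ) (s : ℕ) :
    Set ((Fin p → ℝ) × (Fin n → Fin n → ℝ) × (Fin p → ℝ)) :=
  {bde | bde.1 ∈ Box lb ub ∧
    (∀ i j : Fin n, i ≠ j → (bde.2.1 i j = 0 ∨ bde.2.1 i j = 1)) ∧
    (∀ h, bde.2.2 h = 0 ∨ bde.2.2 h = 1) ∧
    (∀ i j : Fin n, i ≠ j →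
      (bde.2.1 i j - 1) * M i j <
          (x1 i - x1 j) + dot (fun h => xm1 i h - xm1 j h) bde.1 ∧
        (x1 i - x1 j) + dot (fun h => xm1 i h - xm1 j h) bde.1 ≤
          bde.2.1 i j * M i j) ∧
    (∀ h, bde.2.2 h * lb h ≤ bde.1 h ∧ bde.1 h ≤ bde.2.2 h * ub h) ∧
    (∑ h, bde.2.2 h) ≤ (s : ℝ)}

/-- The ℓ₀-constrained parameter set `{β ∈ B : ‖β‖₀ ≤ s}`. -/
def BoxS {p : ℕ} (lb ub : Fin p → ℝ) (s : ℕ) : Set (Fin p → ℝ) :=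
  {β | β ∈ Box lb ub ∧ (Finset.univ.filter fun h => β h ≠ 0).card ≤ s}

lemma dot_sub {p : ℕ} (a b β : Fin p → ℝ) :
    dot (fun h => a h - b h) β = dot a β - dot b β := by
  simp [dot, sub_mul, Finset.sum_sub_distrib]

lemma Rind_eq {n p : ℕ} (x1 : Fin n → ℝ) (xm1 : Fin n → Fin p → ℝ)
    (β : Fin p → ℝ) (i j : Fin n) :
    Rind x1 xm1 β i j =
      if 0 < (x1 i - x1 j) + dot (fun h => xm1 i h - xm1 j h) β then 1 else 0 := by
  rw [Rind, dot_sub]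
  by_cases h : x1 j + dot (xm1 j) β < x1 i + dot (xm1 i) β
  · rw [if_pos h, if_pos (by linarith)]
  · rw [if_neg h, if_neg (by push_neg at h ⊢; linarith)]

lemma abs_le_sSup {p : ℕ} (lb ub : Fin p → ℝ)
    (c : ℝ) (a : Fin p → ℝ) {β : Fin p → ℝ} (hβ : β ∈ Box lb ub) :
    |c + dot a β| ≤ sSup ((fun β => |c + dot a β|) '' Box lb ub) := by
  have hcomp : IsCompact (Box lb ub) := by
    have he : Box lb ub = Set.univ.pi fun h => Set.Icc (lb h) (ub h) := by
      ext β; simp [Box, Set.mem_pi, Set.mem_Icc, Pi.le_def, forall_and]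
    rw [he]; exact isCompact_univ_pi fun h => isCompact_Icc
  have hcont : Continuous fun β : Fin p → ℝ => |c + dot a β| := by
    apply Continuous.abs
    exact continuous_const.add (continuous_finset_sum _ fun h _ =>
      continuous_const.mul (continuous_apply h))
  exact le_csSup ((hcomp.image hcont).bddAbove) (Set.mem_image_of_mem _ hβ)

section Main

variable {n p : ℕ} {x1 : Fin n → ℝ} {xm1 : Fin n → Fin p → ℝ}
  {s : ℕ} {lb ub : Fin p → ℝ} {M : Fin n → Fin n → ℝ}

lemma feas_d_eq (hM : ∀ i j : Fin n, i ≠ j →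
      sSup ((fun β => |(x1 i - x1 j) + dot (fun h => xm1 i h - xm1 j h) β|)
        '' Box lb ub) < M i j)
    {bde : (Fin p → ℝ) × (Fin n → Fin n → ℝ) × (Fin p → ℝ)}
    (hf : bde ∈ Feas x1 xm1 lb ub M s) {i j : Fin n} (hij : i ≠ j) :
    bde.2.1 i j = Rind x1 xm1 bde.1 i j := by
  obtain ⟨hbox, hd01, -, hbigM, -, -⟩ := hf
  set v := (x1 i - x1 j) + dot (fun h => xm1 i h - xm1 j h) bde.1 with hv
  have habs : |v| < M i j := lt_of_le_of_lt (abs_le_sSup lb ub _ _ hbox) (hM i j hij)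
  obtain ⟨hlo, hhi⟩ := hbigM i j hij
  rw [Rind_eq, ← hv]
  rcases hd01 i j hij with h0 | h1
  · rw [h0] at hlo hhi ⊢
    rw [if_neg (by rw [zero_mul] at hhi; exact not_lt.2 hhi)]
  · rw [h1] at hlo hhi ⊢
    rw [if_pos (by rw [sub_self, zero_mul] at hlo; exact hlo)]

lemma feas_support {bde : (Fin p → ℝ) × (Fin n → Fin n → ℝ) × (Fin p → ℝ)}
    (hf : bde ∈ Feas x1 xm1 lb ub M s) :
    (Finset.univ.filter fun h => bde.1 h ≠ 0).card ≤ s := by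
  obtain ⟨-, -, he01, -, hebd, hesum⟩ := hf
  have he1 : ∀ h, bde.1 h ≠ 0 → bde.2.2 h = 1 := by
    intro h hne
    rcases he01 h with h0 | h1
    · exfalso
      obtain ⟨hl, hu⟩ := hebd h
      rw [h0, zero_mul] at hl hu
      exact hne (le_antisymm hu hl)
    · exact h1
  have hnn : ∀ h, (0 : ℝ) ≤ bde.2.2 h := fun h => by
    rcases he01 h with h' | h' <;> simp [h']
  have hcard : ((Finset.univ.filter fun h => bde.1 h ≠ 0).card : ℝ)
      ≤ ∑ h, bde.2.2 h := by
    calc ((Finset.univ.filter fun h => bde.1 h ≠ 0).card : ℝ)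
        = ∑ h ∈ Finset.univ.filter fun h => bde.1 h ≠ 0, bde.2.2 h := by
          rw [Finset.card_eq_sum_ones]
          push_cast
          exact Finset.sum_congr rfl fun h hh =>
            (he1 h (Finset.mem_filter.1 hh).2).symm
      _ ≤ ∑ h, bde.2.2 h :=
          Finset.sum_le_sum_of_subset_of_nonneg (Finset.subset_univ _)
            (fun h _ _ => hnn h)
  have : ((Finset.univ.filter fun h => bde.1 h ≠ 0).card : ℝ) ≤ (s : ℝ) :=
    hcard.trans hesum
  exact_mod_cast this

lemma term_eq (t r : ℝ) (ht : t = 0 ∨ t = 1) (hr : r = 0 ∨ r = 1) :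
    (1 - t) + (2 * t - 1) * r = if t = r then (1 : ℝ) else 0 := by
  rcases ht with h | h <;> rcases hr with h' | h' <;> subst h <;> subst h' <;> norm_num

lemma feas_Lobj_eq_Sn (y : Fin n → ℝ) (hM : ∀ i j : Fin n, i ≠ j →
      sSup ((fun β => |(x1 i - x1 j) + dot (fun h => xm1 i h - xm1 j h) β|)
        '' Box lb ub) < M i j)
    {bde : (Fin p → ℝ) × (Fin n → Fin n → ℝ) × (Fin p → ℝ)}
    (hf : bde ∈ Feas x1 xm1 lb ub M s) :
    Lobj y bde = Sn y x1 xm1 bde.1 := by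
  unfold Lobj Sn
  congr 1
  refine Finset.sum_congr rfl fun i _ => Finset.sum_congr rfl fun j _ => ?_
  by_cases hij : i < j
  · rw [if_pos hij, if_pos hij, feas_d_eq hM hf hij.ne]
    apply term_eq
    · by_cases h : y j < y i <;> simp [h]
    · unfold Rind
      split
      · exact Or.inr rfl
      · exact Or.inl rfl
  · rw [if_neg hij, if_neg hij]

lemma mk_mem_feas (hbox : ∀ h, lb h ≤ 0 ∧ 0 ≤ ub h)
    (hM : ∀ i j : Fin n, i ≠ j →
      sSup ((fun β => |(x1 i - x1 j) + dot (fun h => xm1 i h - xm1 j h) β|)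
        '' Box lb ub) < M i j)
    {β : Fin p → ℝ} (hβ : β ∈ BoxS lb ub s) :
    (β, fun i j => Rind x1 xm1 β i j, fun h => if β h = 0 then (0 : ℝ) else 1)
      ∈ Feas x1 xm1 lb ub M s := by
  classical
  refine ⟨hβ.1, ?_, ?_, ?_, ?_, ?_⟩ <;> dsimp only
  · intro i j _
    unfold Rind
    split
    · exact Or.inr rfl
    · exact Or.inl rfl
  · intro h
    split
    · exact Or.inl rfl
    · exact Or.inr rfl
  · intro i j hij
    have habs : |(x1 i - x1 j) + dot (fun h => xm1 i h - xm1 j h) β| < M i j :=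
      lt_of_le_of_lt (abs_le_sSup lb ub _ _ hβ.1) (hM i j hij)
    obtain ⟨h1, h2⟩ := abs_lt.1 habs
    rw [Rind_eq]
    by_cases hc : 0 < (x1 i - x1 j) + dot (fun h => xm1 i h - xm1 j h) β
    · rw [if_pos hc]
      exact ⟨by rw [sub_self, zero_mul]; exact hc, by rw [one_mul]; exact h2.le⟩
    · rw [if_neg hc]
      exact ⟨by rw [zero_sub, neg_one_mul]; exact h1,
        by rw [zero_mul]; exact not_lt.1 hc⟩
  · intro h
    by_cases hc : β h = 0
    · simp [hc]
    · rw [if_neg hc, one_mul, one_mul]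
      exact hβ.1 h
  · have h1 : ∀ h, (if β h = 0 then (0 : ℝ) else 1)
        = if β h ≠ 0 then (1 : ℝ) else 0 := by
      intro h; by_cases hc : β h = 0 <;> simp [hc]
    simp only [h1]
    rw [Finset.sum_boole]
    exact_mod_cast hβ.2

lemma image_eq (y : Fin n → ℝ) (hbox : ∀ h, lb h ≤ 0 ∧ 0 ≤ ub h)
    (hM : ∀ i j : Fin n, i ≠ j →
      sSup ((fun β => |(x1 i - x1 j) + dot (fun h => xm1 i h - xm1 j h) β|)
        '' Box lb ub) < M i j) :
    Lobj y '' Feas x1 xm1 lb ub M s = Sn y x1 xm1 '' BoxS lb ub s := by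
  ext r
  constructor
  · rintro ⟨bde, hf, rfl⟩
    exact ⟨bde.1, ⟨hf.1, feas_support hf⟩, (feas_Lobj_eq_Sn y hM hf).symm⟩
  · rintro ⟨β, hβ, rfl⟩
    exact ⟨_, mk_mem_feas hbox hM hβ, feas_Lobj_eq_Sn y hM (mk_mem_feas hbox hM hβ)⟩

lemma Sn_image_finite (y : Fin n → ℝ) :
    (Sn y x1 xm1 '' BoxS lb ub s).Finite := by
  classical
  apply Set.Finite.subset
    (Set.Finite.image (fun k : ℕ => (2 / ((n : ℝ) * ((n : ℝ) - 1))) * k)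
      (Set.finite_Iic (n * n)))
  rintro r ⟨β, hβ, rfl⟩
  have hterm : ∀ i j : Fin n,
      (if i < j then
        (if (if y j < y i then (1 : ℝ) else 0) = Rind x1 xm1 β i j then (1 : ℝ)
         else 0) else 0)
      = if (i < j ∧ (if y j < y i then (1 : ℝ) else 0) = Rind x1 xm1 β i j)
          then (1 : ℝ) else 0 := by
    intro i j
    by_cases h1 : i < j <;>
      by_cases h2 : (if y j < y i then (1 : ℝ) else 0) = Rind x1 xm1 β i j <;>
        simp [h1, h2]
  refine ⟨∑ i, (Finset.univ.filter fun j =>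
      i < j ∧ (if y j < y i then (1 : ℝ) else 0) = Rind x1 xm1 β i j).card, ?_, ?_⟩
  · simp only [Set.mem_Iic]
    calc ∑ i, (Finset.univ.filter fun j =>
          i < j ∧ (if y j < y i then (1 : ℝ) else 0) = Rind x1 xm1 β i j).card
        ≤ ∑ _i : Fin n, n :=
          Finset.sum_le_sum fun i _ =>
            le_trans (Finset.card_filter_le _ _) (by simp)
      _ = n * n := by simp [Finset.sum_const, Finset.card_univ, Nat.smul_one_eq_cast]
  · unfold Sn
    dsimp only
    congr 1
    rw [Nat.cast_sum]
    refine Finset.sum_congr rfl fun i _ => ?_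
    simp only [hterm]
    rw [Finset.sum_boole]

lemma exists_max (y : Fin n → ℝ) (hbox : ∀ h, lb h ≤ 0 ∧ 0 ≤ ub h) :
    ∃ β ∈ BoxS lb ub s, ∀ β' ∈ BoxS lb ub s,
      Sn y x1 xm1 β' ≤ Sn y x1 xm1 β := by
  classical
  have h0 : (0 : Fin p → ℝ) ∈ BoxS lb ub s := by
    refine ⟨fun h => ⟨(hbox h).1, (hbox h).2⟩, ?_⟩
    simp
  obtain ⟨β, hβ, hmax⟩ := Set.Finite.exists_maximalFor' (Sn y x1 xm1)
    (BoxS lb ub s) (Sn_image_finite y) ⟨0, h0⟩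
  refine ⟨β, hβ, fun β' hβ' => ?_⟩
  rcases le_total (Sn y x1 xm1 β') (Sn y x1 xm1 β) with h | h
  · exact h
  · exact hmax hβ' h

end Main

/-- **Equivalence of the ℓ₀-constrained best subset rank prediction problem and
its MIP reformulation**: for any feasible `(β, d, e)` one has `‖β‖₀ ≤ s`,
`d_{ij} = R_β(x_i, x_j)` and `L(β, d) = S_n(β)`; the optimal value of the MIP
equals the (attained) maximum of `S_n` over `{β ∈ B : ‖β‖₀ ≤ s}`, and the
`β`-component of any MIP maximizer maximizes `S_n` over that set. -/
theorem best_subset_mip_equivalence (n p : ℕ) (hn : 2 ≤ n)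
    (y : Fin n → ℝ) (x1 : Fin n → ℝ) (xm1 : Fin n → Fin p → ℝ)
    (s : ℕ) (lb ub : Fin p → ℝ) (hbox : ∀ h, lb h ≤ 0 ∧ 0 ≤ ub h)
    (M : Fin n → Fin n → ℝ)
    (hM : ∀ i j : Fin n, i ≠ j →
      sSup ((fun β => |(x1 i - x1 j) + dot (fun h => xm1 i h - xm1 j h) β|)
        '' Box lb ub) < M i j) :
    (∀ bde ∈ Feas x1 xm1 lb ub M s,
        (Finset.univ.filter fun h => bde.1 h ≠ 0).card ≤ s ∧
        (∀ i j : Fin n, i ≠ j → bde.2.1 i j = Rind x1 xm1 bde.1 i j) ∧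
        Lobj y bde = Sn y x1 xm1 bde.1) ∧
    sSup (Lobj y '' Feas x1 xm1 lb ub M s)
      = sSup (Sn y x1 xm1 '' BoxS lb ub s) ∧
    (∃ β ∈ BoxS lb ub s, ∀ β' ∈ BoxS lb ub s,
        Sn y x1 xm1 β' ≤ Sn y x1 xm1 β) ∧
    (∀ bde ∈ Feas x1 xm1 lb ub M s,
      (∀ bde' ∈ Feas x1 xm1 lb ub M s, Lobj y bde' ≤ Lobj y bde) →
        ∀ β' ∈ BoxS lb ub s, Sn y x1 xm1 β' ≤ Sn y x1 xm1 bde.1) := by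
  classical
  have hpart1 : ∀ bde ∈ Feas x1 xm1 lb ub M s,
      (Finset.univ.filter fun h => bde.1 h ≠ 0).card ≤ s ∧
      (∀ i j : Fin n, i ≠ j → bde.2.1 i j = Rind x1 xm1 bde.1 i j) ∧
      Lobj y bde = Sn y x1 xm1 bde.1 :=
    fun bde hf => ⟨feas_support hf, fun i j hij => feas_d_eq hM hf hij,
      feas_Lobj_eq_Sn y hM hf⟩
  refine ⟨hpart1, ?_, exists_max (x1 := x1) (xm1 := xm1) (s := s) y hbox, ?_⟩
  · rw [image_eq y hbox hM]
  · intro bde hf hopt β' hβ'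
    have h2 := mk_mem_feas (M := M) hbox hM hβ'
    calc Sn y x1 xm1 β' = Lobj y _ := (feas_Lobj_eq_Sn y hM h2).symm
      _ ≤ Lobj y bde := hopt _ h2
      _ = Sn y x1 xm1 bde.1 := feas_Lobj_eq_Sn y hM hf


end BestSubsetMip
end
end
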